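/- arXiv:1206.3522 — 6 statements merged into one kernel-verified Lean document; each statement's English description precedes it below -/
import Mathlib

section
/- Let m ≥ 1 and s_1, ..., s_{m-1} ∈ (0,1]. Let (X_t)_{t≥0} be a stochastic process with values in {1,...,m}, adapted to a filtration (F_t), such that X_{t+1} ≥ X_t almost surely (elitism), and such that for every t ≥ 0 and every i with 1 ≤ i ≤ m-1, almost surely on the event {X_t = i} one has P(X_{t+1} ≥ i+1 | F_t) ≥ s_i. Let T = inf{t ≥ 0 : X_t = m}. Then E[T] ≤ Σ_{i=1}^{m-1} 1/s_i. -/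
open MeasureTheory ProbabilityTheory ENNReal

/-- **The fitness-level method.** Let `m ≥ 1` and `s 1, ..., s (m-1) ∈ (0,1]`. Let `X` be a
stochastic process with values in `{1, ..., m}`, adapted to a filtration `ℱ`, which is
almost surely non-decreasing (elitism), and such that for every `t` and every level
`1 ≤ i ≤ m - 1`, almost surely on the event `{X t = i}` the conditional probability (given
`ℱ t`) of reaching a level `≥ i + 1` at time `t + 1` is at least `s i`. Then the expected
hitting time of level `m` is at most `∑_{i=1}^{m-1} 1 / s i`. -/
theorem fitness_level_method
    {Ω : Type} {mΩ : MeasurableSpace Ω} (P : Measure Ω) [IsProbabilityMeasure P]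
    (m : ℕ) (hm : 1 ≤ m) (s : ℕ → ℝ)
    (hs : ∀ i, 1 ≤ i → i + 1 ≤ m → 0 < s i ∧ s i ≤ 1)
    (ℱ : Filtration ℕ mΩ) (X : ℕ → Ω → ℕ)
    (hadapted : Adapted ℱ X)
    (hrange : ∀ t ω, 1 ≤ X t ω ∧ X t ω ≤ m)
    (hmono : ∀ t, ∀ᵐ ω ∂P, X t ω ≤ X (t + 1) ω)
    (hstep : ∀ t i, 1 ≤ i → i + 1 ≤ m →
      ∀ᵐ ω ∂P, X t ω = i →
        s i ≤ (P[Set.indicator {ω' | i + 1 ≤ X (t + 1) ω'} (fun _ => (1 : ℝ)) | ℱ t]) ω) :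
    ∫⁻ ω, (⨅ (t : ℕ) (_ : X t ω = m), (t : ℝ≥0∞)) ∂P ≤
      ENNReal.ofReal (∑ i ∈ Finset.Icc 1 (m - 1), 1 / s i) := by
  -- basic measurability
  have hXf : ∀ t, Measurable[ℱ t] (X t) := fun t => hadapted t
  have hX : ∀ t, Measurable (X t) := fun t => (hXf t).mono (ℱ.le t) le_rfl
  have hEq : ∀ t i, MeasurableSet {ω | X t ω = i} :=
    fun t i => hX t (measurableSet_singleton i)
  have hLe : ∀ t i, MeasurableSet {ω | X t ω ≤ i} :=
    fun t i => hX t measurableSet_Iic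
  -- key one-step inequality
  have key : ∀ t i, 1 ≤ i → i + 1 ≤ m →
      (P {ω | X (t+1) ω ≤ i}).toReal + s i * (P {ω | X t ω = i}).toReal
        ≤ (P {ω | X t ω ≤ i}).toReal := by
    intro t i hi1 him
    set B : Set Ω := {ω | X t ω = i} with hBdef
    set S : Set Ω := {ω' | i + 1 ≤ X (t+1) ω'} with hSdef
    have hB : MeasurableSet B := hEq t i
    have hBf : MeasurableSet[ℱ t] B := hXf t (measurableSet_singleton i)
    have hS : MeasurableSet S := hX (t+1) measurableSet_Ici
    set g : Ω → ℝ := S.indicator (fun _ => (1 : ℝ)) with hgdef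
    have hg : Integrable g P := (integrable_const 1).indicator hS
    have h1 : ∫ ω in B, (P[g|ℱ t]) ω ∂P = ∫ ω in B, g ω ∂P :=
      setIntegral_condExp (ℱ.le t) hg hBf
    have h2 : ∫ ω in B, g ω ∂P = (P (S ∩ B)).toReal := by
      rw [hgdef, setIntegral_indicator hS, setIntegral_const, smul_eq_mul, mul_one,
        Set.inter_comm]
      rfl
    have h3 : s i * (P B).toReal ≤ ∫ ω in B, (P[g|ℱ t]) ω ∂P := by
      have hae : ∀ᵐ ω ∂P.restrict B, s i ≤ (P[g|ℱ t]) ω := by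
        rw [ae_restrict_iff' hB]
        exact hstep t i hi1 him
      calc s i * (P B).toReal = ∫ _ω in B, s i ∂P := by
            rw [setIntegral_const, smul_eq_mul, mul_comm]
            rfl
        _ ≤ ∫ ω in B, (P[g|ℱ t]) ω ∂P :=
            setIntegral_mono_ae_restrict (integrableOn_const (measure_ne_top P B))
              integrable_condExp.integrableOn hae
    have h4 : s i * (P B).toReal ≤ (P (S ∩ B)).toReal := by
      rw [← h2, ← h1]; exact h3
    -- measure inequality
    have hdisj : Disjoint {ω | X (t+1) ω ≤ i} (S ∩ B) := by
      rw [Set.disjoint_left]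
      rintro ω (hω : X (t+1) ω ≤ i) ⟨(hωS : i + 1 ≤ X (t+1) ω), -⟩
      omega
    have hsub : ∀ᵐ ω ∂P, ω ∈ {ω | X (t+1) ω ≤ i} ∪ (S ∩ B) → ω ∈ {ω | X t ω ≤ i} := by
      filter_upwards [hmono t] with ω hω hmem
      rcases hmem with h | ⟨-, hB'⟩
      · exact le_trans hω h
      · exact le_of_eq hB'
    have h5 : P {ω | X (t+1) ω ≤ i} + P (S ∩ B) ≤ P {ω | X t ω ≤ i} := by
      rw [← measure_union hdisj (hS.inter hB)]
      exact measure_mono_ae hsub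
    have h6 : (P {ω | X (t+1) ω ≤ i}).toReal + (P (S ∩ B)).toReal
        ≤ (P {ω | X t ω ≤ i}).toReal := by
      rw [← ENNReal.toReal_add (measure_ne_top P _) (measure_ne_top P _)]
      exact ENNReal.toReal_le_toReal (by exact ne_of_lt (lt_of_le_of_lt h5 (measure_lt_top P _)))
        (measure_ne_top P _) |>.mpr h5 |>.trans_eq rfl
    linarith
  -- partial sum bound
  have hpartial : ∀ i, 1 ≤ i → i + 1 ≤ m → ∀ n : ℕ,
      (∑ t ∈ Finset.range n, s i * (P {ω | X t ω = i}).toReal)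
        + (P {ω | X n ω ≤ i}).toReal ≤ (P {ω | X 0 ω ≤ i}).toReal := by
    intro i hi1 him n
    induction n with
    | zero => simp
    | succ n ih =>
      rw [Finset.sum_range_succ]
      have := key n i hi1 him
      linarith
  have htsum : ∀ i, 1 ≤ i → i + 1 ≤ m →
      ∑' t : ℕ, P {ω | X t ω = i} ≤ ENNReal.ofReal (1 / s i) := by
    intro i hi1 him
    apply ENNReal.tsum_le_of_sum_range_le
    intro n
    have hsi := (hs i hi1 him).1
    have hb : ∑ t ∈ Finset.range n, (P {ω | X t ω = i}).toReal ≤ 1 / s i := by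
      rw [le_div_iff₀ hsi]
      have h0 : (0:ℝ) ≤ (P {ω | X n ω ≤ i}).toReal := ENNReal.toReal_nonneg
      have h1 : (P {ω | X 0 ω ≤ i}).toReal ≤ 1 := by
        have := prob_le_one (μ := P) (s := {ω | X 0 ω ≤ i})
        exact ENNReal.toReal_le_of_le_ofReal one_pos.le (by simpa using this)
      have := hpartial i hi1 him n
      rw [← Finset.mul_sum] at this
      linarith [this]
    calc ∑ t ∈ Finset.range n, P {ω | X t ω = i}
        = ENNReal.ofReal (∑ t ∈ Finset.range n, (P {ω | X t ω = i}).toReal) := by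
          rw [ENNReal.ofReal_sum_of_nonneg (fun _ _ => ENNReal.toReal_nonneg)]
          exact Finset.sum_congr rfl fun t _ => (ENNReal.ofReal_toReal (measure_ne_top P _)).symm
      _ ≤ ENNReal.ofReal (1 / s i) := ENNReal.ofReal_le_ofReal hb
  -- pointwise bound on the hitting time
  have hpoint : ∀ ω, (⨅ (t : ℕ) (_ : X t ω = m), (t : ℝ≥0∞))
      ≤ ∑' t : ℕ, ({ω' | X t ω' ≠ m}).indicator (fun _ => (1 : ℝ≥0∞)) ω := by
    intro ω
    by_cases h : ∃ t, X t ω = m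
    · set n := Nat.find h with hn
      have hspec : X n ω = m := Nat.find_spec h
      have hlt : ∀ t < n, X t ω ≠ m := fun t ht => Nat.find_min h ht
      have h1 : (⨅ (t : ℕ) (_ : X t ω = m), (t : ℝ≥0∞)) ≤ (n : ℝ≥0∞) :=
        iInf_le_of_le n (iInf_le_of_le hspec le_rfl)
      refine h1.trans ?_
      calc (n : ℝ≥0∞) = ∑ t ∈ Finset.range n,
            ({ω' | X t ω' ≠ m}).indicator (fun _ => (1 : ℝ≥0∞)) ω := by
            have h3 : ∀ t ∈ Finset.range n,
                ({ω' | X t ω' ≠ m}).indicator (fun _ => (1 : ℝ≥0∞)) ω = 1 := fun t ht =>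
              Set.indicator_of_mem (hlt t (Finset.mem_range.mp ht)) (fun _ => (1 : ℝ≥0∞))
            rw [Finset.sum_congr rfl h3]
            simp
        _ ≤ _ := ENNReal.sum_le_tsum _
    · push_neg at h
      have h2 : ∀ t : ℕ, ({ω' | X t ω' ≠ m}).indicator (fun _ => (1 : ℝ≥0∞)) ω = 1 :=
        fun t => Set.indicator_of_mem (h t) (fun _ => (1 : ℝ≥0∞))
      rw [tsum_congr h2, ENNReal.tsum_const_eq_top_of_ne_zero one_ne_zero]
      exact le_top
  -- decompose non-optimal event
  have hdec : ∀ t : ℕ, P {ω | X t ω ≠ m}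
      = ∑ i ∈ Finset.Icc 1 (m - 1), P {ω | X t ω = i} := by
    intro t
    have hU : {ω | X t ω ≠ m} = ⋃ i ∈ Finset.Icc 1 (m - 1), {ω | X t ω = i} := by
      ext ω
      simp only [Set.mem_setOf_eq, Set.mem_iUnion, Finset.mem_Icc]
      constructor
      · intro hne
        exact ⟨X t ω, ⟨(hrange t ω).1, by have := (hrange t ω).2; omega⟩, rfl⟩
      · rintro ⟨i, ⟨hi1, hi2⟩, rfl⟩
        omega
    rw [hU, measure_biUnion_finset ?_ (fun i _ => hEq t i)]
    intro i _ j _ hij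
    simp only [Function.onFun, Set.disjoint_left]
    rintro ω (hωi : X t ω = i) (hωj : X t ω = j)
    exact hij (hωi ▸ hωj)
  calc ∫⁻ ω, (⨅ (t : ℕ) (_ : X t ω = m), (t : ℝ≥0∞)) ∂P
      ≤ ∫⁻ ω, ∑' t : ℕ, ({ω' | X t ω' ≠ m}).indicator (fun _ => (1 : ℝ≥0∞)) ω ∂P :=
        lintegral_mono hpoint
    _ = ∑' t : ℕ, ∫⁻ ω, ({ω' | X t ω' ≠ m}).indicator (fun _ => (1 : ℝ≥0∞)) ω ∂P :=
        lintegral_tsum fun t =>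
          (measurable_const.indicator ((hEq t m).compl)).aemeasurable
    _ = ∑' t : ℕ, P {ω | X t ω ≠ m} := by
        refine tsum_congr fun t => ?_
        have : MeasurableSet {ω | X t ω ≠ m} := (hEq t m).compl
        exact lintegral_indicator_one this
    _ = ∑' t : ℕ, ∑ i ∈ Finset.Icc 1 (m - 1), P {ω | X t ω = i} := tsum_congr hdec
    _ = ∑ i ∈ Finset.Icc 1 (m - 1), ∑' t : ℕ, P {ω | X t ω = i} :=
        Summable.tsum_finsetSum fun i _ => ENNReal.summable
    _ ≤ ∑ i ∈ Finset.Icc 1 (m - 1), ENNReal.ofReal (1 / s i) := by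
        refine Finset.sum_le_sum fun i hi => ?_
        rw [Finset.mem_Icc] at hi
        exact htsum i hi.1 (by omega)
    _ = ENNReal.ofReal (∑ i ∈ Finset.Icc 1 (m - 1), 1 / s i) := by
        rw [ENNReal.ofReal_sum_of_nonneg]
        intro i hi
        rw [Finset.mem_Icc] at hi
        exact le_of_lt (div_pos one_pos (hs i hi.1 (by omega)).1)
end

section
/- In the island model with fitness levels, fix a level i with 1 ≤ i ≤ m-1, and let G be the first generation at which some island has level at least i. For 1 ≤ k ≤ μ, let T(k) be the number of generations after G until at least k islands have level at least i, and let L be the number of generations after G until some island has level at least i+1. Then for every k with 1 ≤ k ≤ μ, E[L] ≤ E[T(k)] + 1 + 1/(k·s_i). -/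
open MeasureTheory ProbabilityTheory ENNReal

/-- An island model with fitness levels. There are `nIslands` islands connected by the directed
migration topology `edge`, `m` fitness levels, success probabilities `s`, and a transmission
probability `p`. `X t v` is the level of island `v` at generation `t`. The model is driven by
independent Boolean random variables: `succ t v i` indicates that island `v` would create, by
its own variation, a point of level `> i` in generation `t + 1` if its level at generation `t`
is `i`; `trans t u v` indicates that transmission along the directed edge `(u, v)` succeeds in
generation `t + 1`. -/
structure IslandModel where
  Ω : Type
  mΩ : MeasurableSpace Ω
  P : MeasureTheory.Measure Ω
  nIslands : ℕ
  m : ℕ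
  edge : Fin nIslands → Fin nIslands → Prop
  s : ℕ → ℝ
  p : ℝ
  X : ℕ → Fin nIslands → Ω → ℕ
  succ : ℕ → Fin nIslands → ℕ → Ω → Bool
  trans : ℕ → Fin nIslands → Fin nIslands → Ω → Bool

namespace IslandModel

instance (M : IslandModel) : MeasurableSpace M.Ω := M.mΩ

/-- The combined family of driving Boolean random variables, indexed by the generation and
either an (island, level) pair (variation) or a directed edge (transmission). -/
def B (M : IslandModel) :
    ℕ × (Fin M.nIslands × ℕ ⊕ Fin M.nIslands × Fin M.nIslands) → M.Ω → Bool
  | (t, Sum.inl (v, i)) => M.succ t v i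
  | (t, Sum.inr (u, v)) => M.trans t u v

/-- The history σ-algebra up to generation `t`: generated by the levels of all islands up to
generation `t` together with the driving Boolean variables of the generations before `t`. -/
def hist (M : IslandModel) (t : ℕ) : MeasurableSpace M.Ω :=
  (⨆ q : {q : ℕ // q ≤ t} × Fin M.nIslands,
    MeasurableSpace.comap (M.X q.1.1 q.2) inferInstance) ⊔
  ⨆ j : {j : ℕ × (Fin M.nIslands × ℕ ⊕ Fin M.nIslands × Fin M.nIslands) // j.1 < t},
    MeasurableSpace.comap (M.B j.1) inferInstance

/-- The σ-algebra generated by the driving Boolean variables of generations `≥ t`. -/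
def future (M : IslandModel) (t : ℕ) : MeasurableSpace M.Ω :=
  ⨆ j : {j : ℕ × (Fin M.nIslands × ℕ ⊕ Fin M.nIslands × Fin M.nIslands) // t ≤ j.1},
    MeasurableSpace.comap (M.B j.1) inferInstance

/-- The defining properties of the island model: `P` is a probability measure; every island
always has a level in `{1, ..., m}` which never decreases (elitism); the driving Boolean
variables are mutually independent, and those of generations `≥ t` are independent of the
entire history up to generation `t`; each variation variable `succ t v i` succeeds with
probability at least `s i` and forces island `v` to reach a level `> i` whenever its level is
`i < m`; each transmission variable of an edge `(u, v)` of the topology succeeds with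
probability at least `p` and forces the level of `v` after generation `t + 1` to be at least
the level of `u` at generation `t`. -/
structure Valid (M : IslandModel) : Prop where
  prob : IsProbabilityMeasure M.P
  hμ : 1 ≤ M.nIslands
  hm : 1 ≤ M.m
  hs : ∀ i, 1 ≤ i → i + 1 ≤ M.m → 0 < M.s i ∧ M.s i ≤ 1
  hp0 : 0 < M.p
  hp1 : M.p ≤ 1
  hXmeas : ∀ t v, Measurable (M.X t v)
  hBmeas : ∀ j, Measurable (M.B j)
  hXrange : ∀ t v ω, 1 ≤ M.X t v ω ∧ M.X t v ω ≤ M.m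
  hXmono : ∀ t v ω, M.X t v ω ≤ M.X (t + 1) v ω
  hIndepB : ProbabilityTheory.iIndepFun M.B M.P
  hIndepHist : ∀ t, ProbabilityTheory.Indep (M.future t) (M.hist t) M.P
  hsuccProb : ∀ t v i, 1 ≤ i → i + 1 ≤ M.m →
    ENNReal.ofReal (M.s i) ≤ M.P {ω | M.succ t v i ω = true}
  htransProb : ∀ t u v, M.edge u v →
    ENNReal.ofReal M.p ≤ M.P {ω | M.trans t u v ω = true}
  hsuccDyn : ∀ t v i ω, M.X t v ω = i → i + 1 ≤ M.m → M.succ t v i ω = true →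
    i + 1 ≤ M.X (t + 1) v ω
  htransDyn : ∀ t u v ω, M.edge u v → M.trans t u v ω = true →
    M.X t u ω ≤ M.X (t + 1) v ω

/-- The parallel running time: the first generation at which some island has level `m`
(as an extended real, `∞` if this never happens). -/
noncomputable def Tpar (M : IslandModel) (ω : M.Ω) : ℝ≥0∞ :=
  ⨅ (t : ℕ) (_ : ∃ v, M.X t v ω = M.m), (t : ℝ≥0∞)

end IslandModel


namespace ETOLAux


open Classical

variable {Ω : Type}

/-- Hitting time of a time-indexed family of predicates. -/
noncomputable def hit (P : ℕ → Ω → Prop) (ω : Ω) : ℝ≥0∞ :=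
  ⨅ (t : ℕ) (_ : P t ω), (t : ℝ≥0∞)

lemma hit_le {P : ℕ → Ω → Prop} {ω : Ω} {t : ℕ} (h : P t ω) : hit P ω ≤ t :=
  iInf₂_le t h

lemma hit_mono {P Q : ℕ → Ω → Prop} (h : ∀ t ω, P t ω → Q t ω) (ω : Ω) :
    hit Q ω ≤ hit P ω := by
  refine le_iInf₂ fun t ht => hit_le (h t ω ht)

lemma hit_eq_ite (P : ℕ → Ω → Prop) (ω : Ω) :
    hit P ω = ⨅ t : ℕ, if P t ω then (t : ℝ≥0∞) else ⊤ := by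
  unfold hit; congr 1; funext t; split
  · next h => exact le_antisymm (iInf_le _ h) (le_iInf fun _ => le_rfl)
  · next h => simp [h]

lemma measurable_hit [MeasurableSpace Ω] {P : ℕ → Ω → Prop}
    (h : ∀ t, MeasurableSet {ω | P t ω}) : Measurable (hit P) := by
  have : hit P = fun ω => ⨅ t : ℕ, if P t ω then (t : ℝ≥0∞) else ⊤ := by
    funext ω; exact hit_eq_ite P ω
  rw [this]
  exact Measurable.iInf fun t => Measurable.ite (h t) measurable_const measurable_const

lemma hit_spec {P : ℕ → Ω → Prop} {ω : Ω} (h : ∃ t, P t ω) :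
    ∃ τ : ℕ, hit P ω = τ ∧ P τ ω ∧ ∀ t < τ, ¬ P t ω := by
  refine ⟨Nat.find h, ?_, Nat.find_spec h, fun t ht => Nat.find_min h ht⟩
  refine le_antisymm (hit_le (Nat.find_spec h)) (le_iInf₂ fun t ht => ?_)
  exact_mod_cast Nat.cast_le.2 (Nat.find_min' h ht)

lemma hit_eq_top {P : ℕ → Ω → Prop} {ω : Ω} (h : ∀ t, ¬ P t ω) : hit P ω = ⊤ := by
  rw [hit_eq_ite]; simp [h]

/-- hitting times are `ℕ∞`-valued. -/
lemma hit_natCast_or_top (P : ℕ → Ω → Prop) (ω : Ω) :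
    (∃ n : ℕ, hit P ω = n) ∨ hit P ω = ⊤ := by
  by_cases h : ∃ t, P t ω
  · obtain ⟨τ, hτ, _⟩ := hit_spec h; exact Or.inl ⟨τ, hτ⟩
  · push_neg at h; exact Or.inr (hit_eq_top h)

lemma enat_sub (a b : ℝ≥0∞) (ha : (∃ n : ℕ, a = n) ∨ a = ⊤) (hb : (∃ n : ℕ, b = n) ∨ b = ⊤) :
    (∃ n : ℕ, a - b = n) ∨ a - b = ⊤ := by
  rcases hb with ⟨n, rfl⟩ | rfl
  · rcases ha with ⟨m, rfl⟩ | rfl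
    · exact Or.inl ⟨m - n, by exact_mod_cast (ENNReal.natCast_sub m n).symm⟩
    · exact Or.inr (by simp)
  · exact Or.inl ⟨0, by simp [ENNReal.sub_top]⟩

/-- Pointwise layer-cake bound for `ℕ∞`-valued functions. -/
lemma le_tsum_indicator (f : Ω → ℝ≥0∞) (hf : ∀ ω, (∃ n : ℕ, f ω = n) ∨ f ω = ⊤) (ω : Ω) :
    f ω ≤ ∑' t : ℕ, Set.indicator {ω' | (t : ℝ≥0∞) + 1 ≤ f ω'} (fun _ => 1) ω := by
  rcases hf ω with ⟨n, hn⟩ | hn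
  · rw [hn]
    have : ∀ t : ℕ, Set.indicator {ω' | (t : ℝ≥0∞) + 1 ≤ f ω'} (fun _ => (1:ℝ≥0∞)) ω
        = if t < n then 1 else 0 := by
      intro t
      by_cases ht : t < n
      · rw [Set.indicator_of_mem, if_pos ht]
        simp only [Set.mem_setOf_eq, hn]
        exact_mod_cast Nat.cast_le.2 ht
      · rw [Set.indicator_of_notMem, if_neg ht]
        simp only [Set.mem_setOf_eq, hn]
        intro hc
        have : (t:ℝ≥0∞) + 1 ≤ (n:ℝ≥0∞) := hc
        have : t + 1 ≤ n := by exact_mod_cast this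
        omega
    rw [tsum_congr this, tsum_eq_sum (s := Finset.range n) (by intro t ht; simp at ht; simp [ht])]
    rw [Finset.sum_ite_of_true (by intro t ht; simpa using ht)]
    simp
  · rw [hn]
    have : ∀ t : ℕ, Set.indicator {ω' | (t : ℝ≥0∞) + 1 ≤ f ω'} (fun _ => (1:ℝ≥0∞)) ω = 1 := by
      intro t; rw [Set.indicator_of_mem]; simp [Set.mem_setOf_eq, hn]
    rw [tsum_congr this]
    simp [ENNReal.tsum_const_eq_top_of_ne_zero one_ne_zero]



lemma geom_tail_bound {s : ℝ} (hs0 : 0 < s) (hs1 : s ≤ 1) {k : ℕ} (hk : 1 ≤ k) :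
    ∑' t : ℕ, (ENNReal.ofReal (1 - s)) ^ (k * t) ≤ 1 + ENNReal.ofReal (1 / (k * s)) := by
  have hks : (0:ℝ) < (k:ℝ) * s := by
    have : (0:ℝ) < (k:ℝ) := by exact_mod_cast hk
    positivity
  set c : ℝ := (1 - s) ^ k with hc
  have h1s0 : (0:ℝ) ≤ 1 - s := by linarith
  have hc0 : 0 ≤ c := pow_nonneg h1s0 k
  have hc1 : c < 1 := by
    apply pow_lt_one₀ h1s0 (by linarith) (by omega)
  have h1c : (0:ℝ) < 1 - c := by linarith
  -- Bernoulli
  have hber : 1 + (k:ℝ) * s ≤ (1 + s) ^ k := one_add_mul_le_pow (by linarith) k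
  have hcs : c * (1 + (k:ℝ) * s) ≤ 1 := by
    calc c * (1 + (k:ℝ) * s) ≤ c * (1 + s) ^ k := by
          exact mul_le_mul_of_nonneg_left hber hc0
      _ = ((1 - s) * (1 + s)) ^ k := by rw [hc, ← mul_pow]
      _ = (1 - s ^ 2) ^ k := by ring_nf
      _ ≤ 1 := pow_le_one₀ (by nlinarith) (by nlinarith)
  have hreal : (1 - c)⁻¹ ≤ 1 + 1 / ((k:ℝ) * s) := by
    rw [inv_eq_one_div, div_le_iff₀ h1c]
    have hq : (1 + 1 / ((k:ℝ)*s)) * (1 - c) = 1 + (1 - c * (1 + (k:ℝ)*s)) / ((k:ℝ)*s) := by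
      field_simp
      ring
    rw [hq]
    have : 0 ≤ (1 - c * (1 + (k:ℝ)*s)) / ((k:ℝ)*s) := div_nonneg (by linarith) hks.le
    linarith
  calc ∑' t : ℕ, (ENNReal.ofReal (1 - s)) ^ (k * t)
      = ∑' t : ℕ, ((ENNReal.ofReal (1 - s)) ^ k) ^ t := by
        refine tsum_congr fun t => ?_; rw [← pow_mul]
    _ = (1 - (ENNReal.ofReal (1 - s)) ^ k)⁻¹ := ENNReal.tsum_geometric _
    _ = (1 - ENNReal.ofReal c)⁻¹ := by rw [← ENNReal.ofReal_pow h1s0]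
    _ = (ENNReal.ofReal (1 - c))⁻¹ := by
        rw [ENNReal.ofReal_sub 1 hc0, ENNReal.ofReal_one]
    _ = ENNReal.ofReal ((1 - c)⁻¹) := (ENNReal.ofReal_inv_of_pos h1c).symm
    _ ≤ ENNReal.ofReal (1 + 1 / ((k:ℝ) * s)) := ENNReal.ofReal_le_ofReal hreal
    _ = 1 + ENNReal.ofReal (1 / ((k:ℝ) * s)) := by
        rw [ENNReal.ofReal_add zero_le_one (by positivity), ENNReal.ofReal_one]

section Model

variable (M : IslandModel)

/-- Some island has level at least `i` at generation `t`. -/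
def Pge (i : ℕ) : ℕ → M.Ω → Prop := fun t ω => ∃ v, i ≤ M.X t v ω

/-- At least `k` islands have level at least `i` at generation `t`. -/
def Pcnt (i k : ℕ) : ℕ → M.Ω → Prop := fun t ω =>
  k ≤ Nat.card {v : Fin M.nIslands // i ≤ M.X t v ω}

lemma Pcnt_iff (i k t : ℕ) (ω : M.Ω) :
    Pcnt M i k t ω ↔ k ≤ (Finset.univ.filter fun v => i ≤ M.X t v ω).card := by
  classical
  unfold Pcnt
  rw [Nat.card_eq_fintype_card, Fintype.card_subtype]

lemma X_mono (hM : M.Valid) (v : Fin M.nIslands) (ω : M.Ω) :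
    Monotone fun t => M.X t v ω :=
  monotone_nat_of_le_succ fun t => hM.hXmono t v ω

lemma hist_le (hM : M.Valid) (τ : ℕ) : M.hist τ ≤ M.mΩ := by
  refine sup_le (iSup_le fun q => ?_) (iSup_le fun j => ?_) <;>
    · intro s hs
      rcases hs with ⟨s', hs', rfl⟩
      first
      | exact hM.hXmeas _ _ hs'
      | exact hM.hBmeas _ hs'

lemma measurableSet_hist_X (τ t' : ℕ) (h : t' ≤ τ) (v : Fin M.nIslands) (s : Set ℕ) :
    MeasurableSet[M.hist τ] (M.X t' v ⁻¹' s) := by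
  refine (le_sup_left : _ ≤ M.hist τ) _ ?_
  exact le_iSup (fun q : {q : ℕ // q ≤ τ} × Fin M.nIslands =>
      MeasurableSpace.comap (M.X q.1.1 q.2) inferInstance) (⟨⟨t', h⟩, v⟩) _
    ⟨s, by measurability, rfl⟩

lemma measurableSet_future_B (τ : ℕ)
    (j : ℕ × (Fin M.nIslands × ℕ ⊕ Fin M.nIslands × Fin M.nIslands)) (h : τ ≤ j.1)
    (s : Set Bool) : MeasurableSet[M.future τ] (M.B j ⁻¹' s) := by
  exact le_iSup (fun j' : {j' : ℕ × (Fin M.nIslands × ℕ ⊕ Fin M.nIslands × Fin M.nIslands) //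
      τ ≤ j'.1} => MeasurableSpace.comap (M.B j'.1) inferInstance) (⟨j, h⟩) _
    ⟨s, by measurability, rfl⟩

lemma measurableSet_level {m' : MeasurableSpace M.Ω} {i t : ℕ}
    (h : ∀ v, MeasurableSet[m'] {ω | i ≤ M.X t v ω}) (k : ℕ) :
    MeasurableSet[m'] {ω | Pcnt M i k t ω} := by
  classical
  have he : {ω | Pcnt M i k t ω}
      = {ω | k ≤ (Finset.univ.filter fun v => i ≤ M.X t v ω).card} := by
    ext ω; exact Pcnt_iff M i k t ω
  have he2 : {ω | k ≤ (Finset.univ.filter fun v => i ≤ M.X t v ω).card}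
      = ⋃ (S : Finset (Fin M.nIslands)) (_ : k ≤ S.card), ⋂ v ∈ S, {ω | i ≤ M.X t v ω} := by
    ext ω
    simp only [Set.mem_setOf_eq, Set.mem_iUnion, Set.mem_iInter]
    constructor
    · intro hk
      exact ⟨Finset.univ.filter fun v => i ≤ M.X t v ω, hk,
        fun v hv => (Finset.mem_filter.mp hv).2⟩
    · rintro ⟨S, hS, hall⟩
      refine le_trans hS (Finset.card_le_card ?_)
      intro v hv
      exact Finset.mem_filter.mpr ⟨Finset.mem_univ v, hall v hv⟩
  rw [he, he2]
  exact MeasurableSet.iUnion fun S => MeasurableSet.iUnion fun _ =>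
    MeasurableSet.biInter (Set.to_countable _) fun v _ => h v

lemma measurableSet_Xlevel (hM : M.Valid) (t : ℕ) (v : Fin M.nIslands) (i : ℕ) :
    MeasurableSet {ω | i ≤ M.X t v ω} :=
  hM.hXmeas t v (by measurability : MeasurableSet {n : ℕ | i ≤ n})

lemma measurable_hitPge (hM : M.Valid) (i : ℕ) : Measurable (hit (Pge M i)) := by
  refine measurable_hit fun t => ?_
  have : {ω | Pge M i t ω} = ⋃ v, {ω | i ≤ M.X t v ω} := by
    ext ω; simp [Pge]
  rw [this]
  exact MeasurableSet.iUnion fun v => measurableSet_Xlevel M hM t v i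

lemma measurable_hitPcnt (hM : M.Valid) (i k : ℕ) : Measurable (hit (Pcnt M i k)) := by
  refine measurable_hit fun t => ?_
  exact measurableSet_level M (fun v => measurableSet_Xlevel M hM t v i) k

end Model

section Core

lemma core_bound (M : IslandModel) (hM : M.Valid) (i : ℕ) (hi1 : 1 ≤ i) (him : i + 1 ≤ M.m)
    (k : ℕ) (t : ℕ) :
    M.P {ω | (t : ℝ≥0∞) + 1 ≤ hit (Pge M (i + 1)) ω - hit (Pcnt M i k) ω}
      ≤ ENNReal.ofReal (1 - M.s i) ^ (k * t) := by
  classical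
  haveI := hM.prob
  obtain ⟨hs0, hs1⟩ := hM.hs i hi1 him
  set c : ℝ≥0∞ := ENNReal.ofReal (1 - M.s i) with hcdef
  have hc1 : c ≤ 1 := by
    rw [hcdef]
    exact ENNReal.ofReal_le_one.mpr (by linarith)
  set A : ℕ × Finset (Fin M.nIslands) → Set M.Ω := fun p =>
    {ω | Pcnt M i k p.1 ω ∧ (∀ t' < p.1, ¬ Pcnt M i k t' ω) ∧
         p.2 = Finset.univ.filter (fun v => i ≤ M.X p.1 v ω)} with hAdef
  set Bev : ℕ × Finset (Fin M.nIslands) → Set M.Ω := fun p =>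
    {ω | ∀ v ∈ p.2, ∀ t' ∈ Finset.Ico p.1 (p.1 + t), M.succ t' v i ω = false} with hBdef
  -- Inclusion of the event in the union
  have hincl : {ω | (t : ℝ≥0∞) + 1 ≤ hit (Pge M (i + 1)) ω - hit (Pcnt M i k) ω}
      ⊆ ⋃ p, A p ∩ Bev p := by
    intro ω hω
    simp only [Set.mem_setOf_eq] at hω
    have hne : ∃ t0, Pcnt M i k t0 ω := by
      by_contra hc
      push_neg at hc
      rw [hit_eq_top hc, ENNReal.sub_top] at hω
      simp at hω
    obtain ⟨τ, hτeq, hτP, hτmin⟩ := hit_spec hne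
    have hno : ∀ t' ≤ τ + t, ∀ v, M.X t' v ω ≤ i := by
      intro t' ht' v
      by_contra hcc
      push_neg at hcc
      have hL : hit (Pge M (i + 1)) ω ≤ t' := hit_le ⟨v, hcc⟩
      have h1 : hit (Pge M (i + 1)) ω - hit (Pcnt M i k) ω
          ≤ ((τ + t : ℕ) : ℝ≥0∞) - (τ : ℝ≥0∞) := by
        rw [hτeq]
        exact tsub_le_tsub (le_trans hL (by exact_mod_cast Nat.cast_le.2 ht')) le_rfl
      have h2 : ((τ + t : ℕ) : ℝ≥0∞) - (τ : ℝ≥0∞) = t := by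
        push_cast
        rw [ENNReal.add_sub_cancel_left (ENNReal.natCast_ne_top τ)]
      rw [h2] at h1
      exact lt_irrefl _ (lt_of_lt_of_le
        (ENNReal.lt_add_right (ENNReal.natCast_ne_top t) one_ne_zero) (le_trans hω h1))
    refine Set.mem_iUnion.mpr ⟨(τ, Finset.univ.filter fun v => i ≤ M.X τ v ω),
      ⟨⟨hτP, hτmin, rfl⟩, ?_⟩⟩
    intro v hv t' ht'
    rw [Finset.mem_Ico] at ht'
    by_contra hsucc
    have hsucc' : M.succ t' v i ω = true := by
      revert hsucc
      cases M.succ t' v i ω <;> simp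
    have hvi : i ≤ M.X τ v ω := (Finset.mem_filter.mp hv).2
    have hXeq : M.X t' v ω = i :=
      le_antisymm (hno t' (le_of_lt ht'.2) v) (le_trans hvi (X_mono M hM v ω ht'.1))
    have hdyn := hM.hsuccDyn t' v i ω hXeq him hsucc'
    have := hno (t' + 1) (by omega) v
    omega
  -- measurability
  have hlevel : ∀ (τ t' : ℕ), t' ≤ τ → ∀ v,
      MeasurableSet[M.hist τ] {ω | i ≤ M.X t' v ω} := fun τ t' h v =>
    measurableSet_hist_X M τ t' h v {n | i ≤ n}
  have hAhist : ∀ p, MeasurableSet[M.hist p.1] (A p) := by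
    intro p
    have h1 : MeasurableSet[M.hist p.1] {ω | Pcnt M i k p.1 ω} :=
      measurableSet_level M (hlevel p.1 p.1 le_rfl) k
    have h2 : MeasurableSet[M.hist p.1] {ω | ∀ t' < p.1, ¬ Pcnt M i k t' ω} := by
      have he : {ω | ∀ t' < p.1, ¬ Pcnt M i k t' ω}
          = ⋂ (t' : ℕ) (_ : t' < p.1), {ω | Pcnt M i k t' ω}ᶜ := by
        ext ω; simp
      rw [he]
      exact MeasurableSet.iInter fun t' => MeasurableSet.iInter fun ht' =>
        (measurableSet_level M (hlevel p.1 t' ht'.le) k).compl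
    have h3 : MeasurableSet[M.hist p.1]
        {ω | p.2 = Finset.univ.filter fun v => i ≤ M.X p.1 v ω} := by
      have he : {ω | p.2 = Finset.univ.filter fun v => i ≤ M.X p.1 v ω}
          = ⋂ v : Fin M.nIslands, {ω | v ∈ p.2 ↔ i ≤ M.X p.1 v ω} := by
        ext ω
        simp only [Set.mem_setOf_eq, Set.mem_iInter, Finset.ext_iff, Finset.mem_filter,
          Finset.mem_univ, true_and]
      rw [he]
      refine MeasurableSet.iInter fun v => ?_
      by_cases hv : v ∈ p.2
      · have he2 : {ω | v ∈ p.2 ↔ i ≤ M.X p.1 v ω} = {ω | i ≤ M.X p.1 v ω} := by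
          ext ω; simp [hv]
        rw [he2]; exact hlevel p.1 p.1 le_rfl v
      · have he2 : {ω | v ∈ p.2 ↔ i ≤ M.X p.1 v ω} = {ω | i ≤ M.X p.1 v ω}ᶜ := by
          ext ω; simp [hv]
        rw [he2]; exact (hlevel p.1 p.1 le_rfl v).compl
    have he : A p = {ω | Pcnt M i k p.1 ω} ∩ ({ω | ∀ t' < p.1, ¬ Pcnt M i k t' ω} ∩
        {ω | p.2 = Finset.univ.filter fun v => i ≤ M.X p.1 v ω}) := by
      ext ω; simp only [hAdef, Set.mem_setOf_eq, Set.mem_inter_iff]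
    rw [he]
    exact h1.inter (h2.inter h3)
  have hAmeas : ∀ p, MeasurableSet (A p) := fun p => hist_le M hM p.1 _ (hAhist p)
  have hBfut : ∀ p, MeasurableSet[M.future p.1] (Bev p) := by
    intro p
    have he : Bev p = ⋂ (v : Fin M.nIslands) (_ : v ∈ p.2) (t' : ℕ)
        (_ : t' ∈ Finset.Ico p.1 (p.1 + t)),
        (M.B (t', Sum.inl (v, i)) ⁻¹' {false}) := by
      ext ω
      simp only [hBdef, Set.mem_setOf_eq, Set.mem_iInter, Set.mem_preimage,
        Set.mem_singleton_iff]
      rfl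
    rw [he]
    refine MeasurableSet.iInter fun v => MeasurableSet.iInter fun _ =>
      MeasurableSet.iInter fun t' => MeasurableSet.iInter fun ht' => ?_
    exact measurableSet_future_B M p.1 (t', Sum.inl (v, i))
      (Finset.mem_Ico.mp ht').1 {false}
  -- bound on the probability of Bev p
  have hBbound : ∀ p, k ≤ p.2.card → M.P (Bev p) ≤ c ^ (k * t) := by
    rintro ⟨τ, S⟩ hcard
    have hinj : Function.Injective
        (fun q : Fin M.nIslands × ℕ => ((q.2, Sum.inl (q.1, i)) :
          ℕ × (Fin M.nIslands × ℕ ⊕ Fin M.nIslands × Fin M.nIslands))) := by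
      intro a b hab
      simp only [Prod.mk.injEq, Sum.inl.injEq] at hab
      exact Prod.ext hab.2.1 hab.1
    set J : Finset (ℕ × (Fin M.nIslands × ℕ ⊕ Fin M.nIslands × Fin M.nIslands)) :=
      (S ×ˢ Finset.Ico τ (τ + t)).image
        (fun q => ((q.2 : ℕ), Sum.inl (q.1, i))) with hJdef
    have hBev_eq : Bev (τ, S) = ⋂ j ∈ J, (M.B j ⁻¹' {false}) := by
      ext ω
      simp only [hBdef, hJdef, Set.mem_setOf_eq, Set.mem_iInter, Finset.mem_image,
        Finset.mem_product, Set.mem_preimage, Set.mem_singleton_iff]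
      constructor
      · rintro h j ⟨q, ⟨hq1, hq2⟩, rfl⟩
        exact h q.1 hq1 q.2 hq2
      · intro h v hv t' ht'
        exact h ((t' : ℕ), Sum.inl (v, i)) ⟨(v, t'), ⟨hv, ht'⟩, rfl⟩
    have hprod := hM.hIndepB.meas_biInter (S := J) (s := fun j => M.B j ⁻¹' {false})
      (fun j _ => ⟨{false}, trivial, rfl⟩)
    have hsingle : ∀ j ∈ J, M.P (M.B j ⁻¹' {false}) ≤ c := by
      intro j hj
      obtain ⟨q, _, rfl⟩ := Finset.mem_image.mp hj
      have hset2 : (M.B ((q.2 : ℕ), Sum.inl (q.1, i)) ⁻¹' {false})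
          = {ω | M.succ q.2 q.1 i ω = true}ᶜ := by
        ext ω
        simp only [Set.mem_preimage, Set.mem_singleton_iff, Set.mem_compl_iff,
          Set.mem_setOf_eq]
        show M.succ q.2 q.1 i ω = false ↔ ¬M.succ q.2 q.1 i ω = true
        cases M.succ q.2 q.1 i ω <;> simp
      have hmeas2 : MeasurableSet {ω | M.succ q.2 q.1 i ω = true} := by
        have : {ω | M.succ q.2 q.1 i ω = true}
            = M.B ((q.2 : ℕ), Sum.inl (q.1, i)) ⁻¹' {true} := rfl
        rw [this]
        exact hM.hBmeas _ trivial
      rw [hset2, prob_compl_eq_one_sub hmeas2]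
      calc (1 : ℝ≥0∞) - M.P {ω | M.succ q.2 q.1 i ω = true}
          ≤ 1 - ENNReal.ofReal (M.s i) :=
            tsub_le_tsub_left (hM.hsuccProb q.2 q.1 i hi1 him) 1
        _ = c := by
            rw [hcdef, ENNReal.ofReal_sub 1 hs0.le, ENNReal.ofReal_one]
    have hcardJ : J.card = S.card * t := by
      rw [hJdef, Finset.card_image_of_injective _ hinj, Finset.card_product,
        Nat.card_Ico]
      congr 1
      omega
    calc M.P (Bev (τ, S)) = ∏ j ∈ J, M.P (M.B j ⁻¹' {false}) := by rw [hBev_eq, hprod]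
      _ ≤ ∏ _j ∈ J, c := Finset.prod_le_prod' hsingle
      _ = c ^ J.card := Finset.prod_const c
      _ ≤ c ^ (k * t) := by
          rw [hcardJ]
          exact pow_le_pow_of_le_one zero_le hc1 (Nat.mul_le_mul_right t hcard)
  -- disjointness and summability of A
  have hdisj : Pairwise (Function.onFun Disjoint A) := by
    intro p q hpq
    rw [Function.onFun, Set.disjoint_left]
    intro ω hp hq
    rcases lt_trichotomy p.1 q.1 with h | h | h
    · exact hq.2.1 p.1 h hp.1
    · exact hpq (Prod.ext h (by rw [hp.2.2, hq.2.2, h]))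
    · exact hp.2.1 q.1 h hq.1
  have hsum : ∑' p, M.P (A p) ≤ 1 := by
    rw [← measure_iUnion hdisj hAmeas]
    exact prob_le_one
  -- per-index bound
  have key : ∀ p, M.P (A p ∩ Bev p) ≤ c ^ (k * t) * M.P (A p) := by
    intro p
    by_cases hcard : k ≤ p.2.card
    · rw [Set.inter_comm, (Indep_iff _ _ _).mp (hM.hIndepHist p.1) _ _ (hBfut p) (hAhist p)]
      exact mul_le_mul_left (hBbound p hcard) _
    · have hemp : A p = ∅ := by
        ext ω
        simp only [Set.mem_empty_iff_false, iff_false]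
        intro hω
        apply hcard
        rw [hω.2.2]
        exact (Pcnt_iff M i k p.1 ω).mp hω.1
      simp [hemp]
  calc M.P {ω | (t : ℝ≥0∞) + 1 ≤ hit (Pge M (i + 1)) ω - hit (Pcnt M i k) ω}
      ≤ M.P (⋃ p, A p ∩ Bev p) := measure_mono hincl
    _ ≤ ∑' p, M.P (A p ∩ Bev p) := measure_iUnion_le _
    _ ≤ ∑' p, c ^ (k * t) * M.P (A p) := ENNReal.tsum_le_tsum key
    _ = c ^ (k * t) * ∑' p, M.P (A p) := ENNReal.tsum_mul_left
    _ ≤ c ^ (k * t) * 1 := mul_le_mul_right hsum _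
    _ = c ^ (k * t) := mul_one _


end Core

lemma middle_bound (M : IslandModel) (hM : M.Valid) (i : ℕ) (hi1 : 1 ≤ i) (him : i + 1 ≤ M.m)
    (k : ℕ) (hk1 : 1 ≤ k) :
    ∫⁻ ω, (hit (Pge M (i + 1)) ω - hit (Pcnt M i k) ω) ∂M.P
      ≤ 1 + ENNReal.ofReal (1 / (k * M.s i)) := by
  classical
  haveI := hM.prob
  obtain ⟨hs0, hs1⟩ := hM.hs i hi1 him
  set f : M.Ω → ℝ≥0∞ := fun ω => hit (Pge M (i + 1)) ω - hit (Pcnt M i k) ω with hf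
  have hfmeas : Measurable f :=
    (measurable_hitPge M hM (i + 1)).sub (measurable_hitPcnt M hM i k)
  have hfnat : ∀ ω, (∃ n : ℕ, f ω = n) ∨ f ω = ⊤ := fun ω =>
    enat_sub _ _ (hit_natCast_or_top _ _) (hit_natCast_or_top _ _)
  have hset : ∀ t : ℕ, MeasurableSet {ω' | (t : ℝ≥0∞) + 1 ≤ f ω'} := fun t =>
    hfmeas measurableSet_Ici
  calc ∫⁻ ω, f ω ∂M.P
      ≤ ∫⁻ ω, ∑' t : ℕ, Set.indicator {ω' | (t : ℝ≥0∞) + 1 ≤ f ω'} (fun _ => 1) ω ∂M.P :=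
        lintegral_mono (le_tsum_indicator f hfnat)
    _ = ∑' t : ℕ, ∫⁻ ω, Set.indicator {ω' | (t : ℝ≥0∞) + 1 ≤ f ω'} (fun _ => 1) ω ∂M.P :=
        lintegral_tsum fun t => (measurable_const.indicator (hset t)).aemeasurable
    _ = ∑' t : ℕ, M.P {ω' | (t : ℝ≥0∞) + 1 ≤ f ω'} := by
        refine tsum_congr fun t => ?_
        exact lintegral_indicator_one (hset t)
    _ ≤ ∑' t : ℕ, ENNReal.ofReal (1 - M.s i) ^ (k * t) :=
        ENNReal.tsum_le_tsum fun t => core_bound M hM i hi1 him k t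
    _ ≤ 1 + ENNReal.ofReal (1 / (k * M.s i)) := geom_tail_bound hs0 hs1 hk1

end ETOLAux

/-- **Expected time on one fitness level** (Lemma 4 in the paper). Fix a level `1 ≤ i ≤ m - 1`
and `1 ≤ k ≤ μ`. Let `G` be the first generation at which some island has level `≥ i`, let
`T(k)` be the number of generations after `G` until at least `k` islands have level `≥ i`, and
let `L` be the number of generations after `G` until some island has level `≥ i + 1`. Then
`E[L] ≤ E[T(k)] + 1 + 1 / (k · s i)`. -/
theorem expected_time_on_level (M : IslandModel) (hM : M.Valid)
    (i : ℕ) (hi1 : 1 ≤ i) (him : i + 1 ≤ M.m)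
    (k : ℕ) (hk1 : 1 ≤ k) (hkμ : k ≤ M.nIslands) :
    ∫⁻ ω, ((⨅ (t : ℕ) (_ : ∃ v, i + 1 ≤ M.X t v ω), (t : ℝ≥0∞)) -
        (⨅ (t : ℕ) (_ : ∃ v, i ≤ M.X t v ω), (t : ℝ≥0∞))) ∂M.P ≤
      (∫⁻ ω, ((⨅ (t : ℕ) (_ : k ≤ Nat.card {v : Fin M.nIslands // i ≤ M.X t v ω}),
          (t : ℝ≥0∞)) -
        (⨅ (t : ℕ) (_ : ∃ v, i ≤ M.X t v ω), (t : ℝ≥0∞))) ∂M.P)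
        + 1 + ENNReal.ofReal (1 / (k * M.s i)) := by
  classical
  have hG : Measurable (ETOLAux.hit (ETOLAux.Pge M i)) := ETOLAux.measurable_hitPge M hM i
  have hTk : Measurable (ETOLAux.hit (ETOLAux.Pcnt M i k)) := ETOLAux.measurable_hitPcnt M hM i k
  show (∫⁻ ω, (ETOLAux.hit (ETOLAux.Pge M (i + 1)) ω - ETOLAux.hit (ETOLAux.Pge M i) ω) ∂M.P)
      ≤ (∫⁻ ω, (ETOLAux.hit (ETOLAux.Pcnt M i k) ω - ETOLAux.hit (ETOLAux.Pge M i) ω) ∂M.P)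
        + 1 + ENNReal.ofReal (1 / (k * M.s i))
  calc ∫⁻ ω, (ETOLAux.hit (ETOLAux.Pge M (i + 1)) ω - ETOLAux.hit (ETOLAux.Pge M i) ω) ∂M.P
      ≤ ∫⁻ ω, ((ETOLAux.hit (ETOLAux.Pcnt M i k) ω - ETOLAux.hit (ETOLAux.Pge M i) ω)
          + (ETOLAux.hit (ETOLAux.Pge M (i + 1)) ω - ETOLAux.hit (ETOLAux.Pcnt M i k) ω)) ∂M.P := by
        refine lintegral_mono fun ω => ?_
        exact tsub_le_tsub_add_tsub.trans (add_comm _ _).le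
    _ = (∫⁻ ω, (ETOLAux.hit (ETOLAux.Pcnt M i k) ω - ETOLAux.hit (ETOLAux.Pge M i) ω) ∂M.P)
        + ∫⁻ ω, (ETOLAux.hit (ETOLAux.Pge M (i + 1)) ω - ETOLAux.hit (ETOLAux.Pcnt M i k) ω) ∂M.P :=
        lintegral_add_left (hTk.sub hG) _
    _ ≤ (∫⁻ ω, (ETOLAux.hit (ETOLAux.Pcnt M i k) ω - ETOLAux.hit (ETOLAux.Pge M i) ω) ∂M.P)
        + (1 + ENNReal.ofReal (1 / (k * M.s i))) :=
        add_le_add le_rfl (ETOLAux.middle_bound M hM i hi1 him k hk1)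
    _ = (∫⁻ ω, (ETOLAux.hit (ETOLAux.Pcnt M i k) ω - ETOLAux.hit (ETOLAux.Pge M i) ω) ∂M.P)
        + 1 + ENNReal.ofReal (1 / (k * M.s i)) := by rw [add_assoc]
end

section
/- Consider the randomized information propagation process with transmission probability p on a finite undirected graph G starting at vertex v*. For i ∈ ℕ, let V_i be the set of vertices at graph distance exactly i from v*, and for k ≥ 1 let S_k := Σ_{i=1}^{k} |V_i|. Then for every k ≥ 1 and every real λ ≥ 2, the probability that after ⌈λk/p⌉ rounds some vertex at graph distance at most k from v* is still uninformed is at most S_k · exp(-((λ-1)²/(2λ)) · k), which in turn is at most S_k · exp(-λk/8). -/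
open MeasureTheory ProbabilityTheory ENNReal

/-- The informed vertices of the randomized information propagation process on the directed
graph with edge relation `E`, driven by the coins `coin` and started at `v0`: initially exactly
`v0` is informed, informed vertices stay informed, and in each round every informed vertex `u`
informs each out-neighbour `v` whenever the corresponding coin `coin t u v` comes up `true`. -/
def informed {V Ω : Type} (E : V → V → Prop) (coin : ℕ → V → V → Ω → Bool) (v0 : V) :
    ℕ → V → Ω → Prop
  | 0, v, _ => v = v0
  | t + 1, v, ω => informed E coin v0 t v ω ∨
      ∃ u, E u v ∧ informed E coin v0 t u ω ∧ coin t u v ω = true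

/-- The coins driving the propagation process with transmission probability `p`: measurable,
mutually independent, and each one `true` with probability exactly `p`. -/
def PropagationCoins {V Ω : Type} [MeasurableSpace Ω] (coin : ℕ → V → V → Ω → Bool)
    (P : MeasureTheory.Measure Ω) (p : ℝ) : Prop :=
  (∀ t u v, Measurable (coin t u v)) ∧
  ProbabilityTheory.iIndepFun
    (fun j : ℕ × V × V => coin j.1 j.2.1 j.2.2) P ∧
  ∀ t u v, P {ω | coin t u v ω = true} = ENNReal.ofReal p

namespace PropTail

def Nfun (c : ℕ → ℕ → Bool) : ℕ → ℕ
  | 0 => 0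
  | t + 1 => Nfun c t + (if c t (Nfun c t) then 1 else 0)

lemma Nfun_le (c : ℕ → ℕ → Bool) : ∀ t, Nfun c t ≤ t := by
  intro t
  induction t with
  | zero => simp [Nfun]
  | succ t ih => simp only [Nfun]; split <;> omega

lemma Nfun_congr (c c' : ℕ → ℕ → Bool) (t : ℕ)
    (h : ∀ s j, s < t → j ≤ s → c s j = c' s j) : Nfun c t = Nfun c' t := by
  induction t with
  | zero => rfl
  | succ t ih =>
    have ht : Nfun c t = Nfun c' t := ih fun s j hs hj => h s j (by omega) hj
    simp only [Nfun, ht, h t (Nfun c' t) (by omega) (ht ▸ Nfun_le c t)]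

variable {V Ω : Type} [MeasurableSpace Ω]

def Np (coin : ℕ → V → V → Ω → Bool) (e : ℕ → V × V) (t : ℕ) (ω : Ω) : ℕ :=
  Nfun (fun s j => coin s (e j).1 (e j).2 ω) t

omit [MeasurableSpace Ω] in
lemma Np_succ (coin : ℕ → V → V → Ω → Bool) (e : ℕ → V × V) (t : ℕ) (ω : Ω) :
    Np coin e (t + 1) ω =
      Np coin e t ω + (if coin t (e (Np coin e t ω)).1 (e (Np coin e t ω)).2 ω then 1 else 0) :=
  rfl

omit [MeasurableSpace Ω] in
lemma Np_zero (coin : ℕ → V → V → Ω → Bool) (e : ℕ → V × V) (ω : Ω) : Np coin e 0 ω = 0 := rfl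

lemma measurable_Np (coin : ℕ → V → V → Ω → Bool) (e : ℕ → V × V)
    (hm : ∀ t u v, Measurable (coin t u v)) (t : ℕ) : Measurable (Np coin e t) := by
  induction t with
  | zero => exact measurable_const
  | succ t ih =>
    have h2 : Measurable (fun ω =>
        (if coin t (e (Np coin e t ω)).1 (e (Np coin e t ω)).2 ω then 1 else 0 : ℕ)) := by
      have : (fun ω => (if coin t (e (Np coin e t ω)).1 (e (Np coin e t ω)).2 ω then 1 else 0 : ℕ))
          = (fun q : Ω × ℕ => (if coin t (e q.2).1 (e q.2).2 q.1 then 1 else 0 : ℕ)) ∘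
            (fun ω => (ω, Np coin e t ω)) := rfl
      rw [this]
      exact (measurable_from_prod_countable_left fun n =>
        (measurable_of_countable (fun b : Bool => if b then (1:ℕ) else 0)).comp
          (hm t (e n).1 (e n).2)).comp (measurable_id.prodMk ih)
    exact ih.add h2

lemma indepFun_Np {P : Measure Ω}
    (coin : ℕ → V → V → Ω → Bool) (e : ℕ → V × V)
    (hm : ∀ t u v, Measurable (coin t u v))
    (hI : iIndepFun (fun j : ℕ × V × V => coin j.1 j.2.1 j.2.2) P)
    (t : ℕ) (a b : V) :
    IndepFun (Np coin e t) (coin t a b) P := by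
  classical
  set S : Finset (ℕ × V × V) :=
    ((Finset.range t) ×ˢ (Finset.range t)).image
      (fun sj : ℕ × ℕ => (sj.1, (e sj.2).1, (e sj.2).2)) with hS
  set T : Finset (ℕ × V × V) := {(t, a, b)} with hT
  have hdisj : Disjoint S T := by
    simp only [hS, hT, Finset.disjoint_singleton_right, Finset.mem_image, Finset.mem_product,
      Finset.mem_range]
    rintro ⟨⟨s, j⟩, ⟨hs, -⟩, hEq⟩
    have : s = t := congrArg Prod.fst hEq
    omega
  have hbase := hI.indepFun_finset S T hdisj (fun i => hm i.1 i.2.1 i.2.2)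
  set φ : (∀ _ : S, Bool) → ℕ := fun x =>
    Nfun (fun s j => if h : (s, (e j).1, (e j).2) ∈ S then x ⟨_, h⟩ else false) t with hφ
  set ψ : (∀ _ : T, Bool) → Bool := fun x => x ⟨(t, a, b), Finset.mem_singleton_self _⟩ with hψ
  have h1 : Np coin e t = φ ∘ (fun ω (i : S) => coin i.1.1 i.1.2.1 i.1.2.2 ω) := by
    funext ω
    refine Nfun_congr _ _ t fun s j hs hj => ?_
    have hmem : (s, (e j).1, (e j).2) ∈ S := by
      simp only [hS, Finset.mem_image, Finset.mem_product, Finset.mem_range]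
      exact ⟨(s, j), ⟨hs, by omega⟩, rfl⟩
    simp [φ, hmem]
  have h2 : coin t a b = ψ ∘ (fun ω (i : T) => coin i.1.1 i.1.2.1 i.1.2.2 ω) := rfl
  rw [h1, h2]
  exact hbase.comp (measurable_of_countable φ) (measurable_of_countable ψ)

lemma Np_dist {P : Measure Ω} [IsProbabilityMeasure P] {p : ℝ} (hp0 : 0 ≤ p) (hp1 : p ≤ 1)
    (coin : ℕ → V → V → Ω → Bool) (e : ℕ → V × V)
    (hm : ∀ t u v, Measurable (coin t u v))
    (hI : iIndepFun (fun j : ℕ × V × V => coin j.1 j.2.1 j.2.2) P)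
    (hprob : ∀ t u v, P {ω | coin t u v ω = true} = ENNReal.ofReal p) :
    ∀ t j, P (Np coin e t ⁻¹' {j}) =
      ENNReal.ofReal ((t.choose j : ℝ) * p ^ j * (1 - p) ^ (t - j)) := by
  have h1p : 0 ≤ 1 - p := by linarith
  have hcoinmeas : ∀ (t : ℕ) (a b : V) (bv : Bool),
      MeasurableSet {ω | coin t a b ω = bv} := fun t a b bv =>
    (hm t a b) (MeasurableSet.singleton bv)
  have hfalse : ∀ (t : ℕ) (a b : V),
      P {ω | coin t a b ω = false} = ENNReal.ofReal (1 - p) := by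
    intro t a b
    have hc : {ω | coin t a b ω = false} = {ω | coin t a b ω = true}ᶜ := by
      ext ω; simp
    rw [hc, prob_compl_eq_one_sub (hcoinmeas t a b true), hprob,
      ← ENNReal.ofReal_one, ← ENNReal.ofReal_sub _ hp0]
  intro t
  induction t with
  | zero =>
    intro j
    rcases Nat.eq_zero_or_pos j with rfl | hj
    · have : Np coin e 0 ⁻¹' {0} = Set.univ := by
        ext ω; simp [Np_zero]
      simp [this]
    · have : Np coin e 0 ⁻¹' {j} = ∅ := by
        ext ω; simp [Np_zero]; omega
      simp [this, Nat.choose_eq_zero_of_lt hj]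
  | succ t ih =>
    intro j
    rcases Nat.eq_zero_or_pos j with rfl | hj
    · have hset : Np coin e (t+1) ⁻¹' {0} =
          (Np coin e t ⁻¹' {0}) ∩ (coin t (e 0).1 (e 0).2 ⁻¹' {false}) := by
        ext ω
        simp only [Set.mem_preimage, Set.mem_singleton_iff, Set.mem_inter_iff, Np_succ]
        constructor
        · intro h
          cases hb : coin t (e (Np coin e t ω)).1 (e (Np coin e t ω)).2 ω with
          | false =>
            simp only [hb] at h
            simp only [Bool.false_eq_true, if_false, add_zero] at h
            exact ⟨h, h ▸ hb⟩
          | true => simp only [hb, if_true] at h; omega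
        · rintro ⟨h0, hb⟩
          rw [h0, hb]
          simp
      have hind := (indepFun_Np coin e hm hI t (e 0).1 (e 0).2).measure_inter_preimage_eq_mul
        {0} {false} (by trivial) (by trivial)
      rw [hset, hind, ih 0]
      have : {ω | coin t (e 0).1 (e 0).2 ω = false} = coin t (e 0).1 (e 0).2 ⁻¹' {false} := rfl
      rw [← this, hfalse, ← ENNReal.ofReal_mul (by positivity)]
      congr 1
      simp only [Nat.choose_zero_right, Nat.cast_one, pow_zero, Nat.sub_zero, pow_succ]
      ring
    · obtain ⟨m, rfl⟩ : ∃ m, j = m + 1 := ⟨j - 1, by omega⟩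
      have hset : Np coin e (t+1) ⁻¹' {m+1} =
          ((Np coin e t ⁻¹' {m+1}) ∩ (coin t (e (m+1)).1 (e (m+1)).2 ⁻¹' {false})) ∪
          ((Np coin e t ⁻¹' {m}) ∩ (coin t (e m).1 (e m).2 ⁻¹' {true})) := by
        ext ω
        simp only [Set.mem_preimage, Set.mem_singleton_iff, Set.mem_inter_iff, Set.mem_union,
          Np_succ]
        constructor
        · intro h
          cases hb : coin t (e (Np coin e t ω)).1 (e (Np coin e t ω)).2 ω with
          | false =>
            simp only [hb, Bool.false_eq_true, if_false, add_zero] at h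
            exact Or.inl ⟨h, h ▸ hb⟩
          | true =>
            simp only [hb, if_true] at h
            have hmm : Np coin e t ω = m := by omega
            exact Or.inr ⟨hmm, hmm ▸ hb⟩
        · rintro (⟨h0, hb⟩ | ⟨h0, hb⟩) <;> rw [h0, hb] <;> simp
      have hdisj : Disjoint
          ((Np coin e t ⁻¹' {m+1}) ∩ (coin t (e (m+1)).1 (e (m+1)).2 ⁻¹' {false}))
          ((Np coin e t ⁻¹' {m}) ∩ (coin t (e m).1 (e m).2 ⁻¹' {true})) := by
        refine Set.disjoint_left.2 ?_
        rintro ω ⟨h1, -⟩ ⟨h2, -⟩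
        simp only [Set.mem_preimage, Set.mem_singleton_iff] at h1 h2
        omega
      have hmeas2 : MeasurableSet
          ((Np coin e t ⁻¹' {m}) ∩ (coin t (e m).1 (e m).2 ⁻¹' {true})) :=
        ((measurable_Np coin e hm t) (by trivial : MeasurableSet {m})).inter
          ((hm t _ _) (by trivial))
      rw [hset, measure_union hdisj hmeas2]
      have hi1 := (indepFun_Np coin e hm hI t (e (m+1)).1 (e (m+1)).2).measure_inter_preimage_eq_mul
        {m+1} {false} (by trivial) (by trivial)
      have hi2 := (indepFun_Np coin e hm hI t (e m).1 (e m).2).measure_inter_preimage_eq_mul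
        {m} {true} (by trivial) (by trivial)
      rw [hi1, hi2, ih (m+1), ih m]
      have e1 : (coin t (e (m+1)).1 (e (m+1)).2 ⁻¹' {false}) =
          {ω | coin t (e (m+1)).1 (e (m+1)).2 ω = false} := rfl
      have e2 : (coin t (e m).1 (e m).2 ⁻¹' {true}) =
          {ω | coin t (e m).1 (e m).2 ω = true} := rfl
      rw [e1, e2, hfalse, hprob, ← ENNReal.ofReal_mul (by positivity),
        ← ENNReal.ofReal_mul (by positivity), ← ENNReal.ofReal_add (by positivity) (by positivity)]
      congr 1
      have hps : ((t+1).choose (m+1) : ℝ) = (t.choose m : ℝ) + (t.choose (m+1) : ℝ) := by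
        rw [Nat.choose_succ_succ]; push_cast; ring
      rcases le_or_gt (m + 1) t with hmt | hmt
      · have ha : t - (m+1) + 1 = t - m := by omega
        have hb : t + 1 - (m+1) = t - m := by omega
        rw [hb, hps, ← ha, pow_succ]
        ring
      · have hz : (t.choose (m+1) : ℝ) = 0 := by
          norm_cast; exact Nat.choose_eq_zero_of_lt hmt
        have ha : t - m = 0 := by omega
        have hb : t + 1 - (m+1) = 0 := by omega
        rw [hz, hps, ha, hb, hz]
        ring

lemma log_le_half (lam : ℝ) (hlam : 2 ≤ lam) : Real.log lam ≤ (lam - 1/lam) / 2 := by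
  have hpos : (0:ℝ) < lam := by linarith
  have hlog : 0 < Real.log lam := Real.log_pos (by linarith)
  have h := (Real.self_lt_sinh_iff.2 hlog).le
  rw [Real.sinh_eq, Real.exp_log hpos, Real.exp_neg, Real.exp_log hpos] at h
  calc Real.log lam ≤ (lam - lam⁻¹)/2 := h
    _ = (lam - 1/lam)/2 := by rw [one_div]

lemma chernoff_sum (p lam : ℝ) (hp0 : 0 < p) (hp1 : p ≤ 1) (k d T : ℕ)
    (hk : 1 ≤ k) (hdk : d ≤ k) (hlam : 2 ≤ lam) (hT : lam * k / p ≤ (T : ℝ)) :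
    ∑ j ∈ Finset.range d, ((T.choose j : ℝ) * p ^ j * (1 - p) ^ (T - j)) ≤
      Real.exp (-((lam - 1) ^ 2 / (2 * lam)) * k) := by
  have hlam0 : (0:ℝ) < lam := by linarith
  have hlam1 : (1:ℝ) ≤ lam := by linarith
  have h1p : (0:ℝ) ≤ 1 - p := by linarith
  have hterm : ∀ j ∈ Finset.range d,
      ((T.choose j : ℝ) * p ^ j * (1 - p) ^ (T - j)) ≤
        lam ^ k * ((p/lam) ^ j * (1 - p) ^ (T - j) * (T.choose j : ℝ)) := by
    intro j hj
    rw [Finset.mem_range] at hj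
    have hjk : j ≤ k := by omega
    have key : (1:ℝ) ≤ lam ^ k * (1/lam) ^ j := by
      have : lam ^ k * (1/lam) ^ j = lam ^ (k - j) := by
        rw [div_pow, one_pow, mul_one_div, eq_comm, _root_.eq_div_iff (by positivity), ← pow_add]
        congr 1; omega
      rw [this]
      exact one_le_pow₀ hlam1
    have hnn : (0:ℝ) ≤ (T.choose j : ℝ) * p ^ j * (1 - p) ^ (T - j) := by positivity
    calc ((T.choose j : ℝ) * p ^ j * (1 - p) ^ (T - j))
        = 1 * ((T.choose j : ℝ) * p ^ j * (1 - p) ^ (T - j)) := by ring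
      _ ≤ (lam ^ k * (1/lam) ^ j) * ((T.choose j : ℝ) * p ^ j * (1 - p) ^ (T - j)) :=
          mul_le_mul_of_nonneg_right key hnn
      _ = lam ^ k * ((p/lam) ^ j * (1 - p) ^ (T - j) * (T.choose j : ℝ)) := by
          rw [div_pow, div_pow, one_pow]; ring
  have hdT : d ≤ T + 1 := by
    have h2 : (2:ℝ) * k ≤ lam * k / p := by
      rw [le_div_iff₀ hp0]
      have : (2:ℝ) * k * p ≤ 2 * k * 1 := by
        apply mul_le_mul_of_nonneg_left hp1; positivity
      nlinarith [(by exact_mod_cast hk : (1:ℝ) ≤ (k:ℝ))]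
    have : (d:ℝ) ≤ (T:ℝ) := by
      have hdk' : (d:ℝ) ≤ (k:ℝ) := Nat.cast_le.2 hdk
      have hk2 : (k:ℝ) ≤ 2 * k := by nlinarith [Nat.cast_nonneg (α := ℝ) k]
      linarith
    have := Nat.cast_le.1 this
    omega
  calc ∑ j ∈ Finset.range d, ((T.choose j : ℝ) * p ^ j * (1 - p) ^ (T - j))
      ≤ ∑ j ∈ Finset.range d, lam ^ k * ((p/lam) ^ j * (1 - p) ^ (T - j) * (T.choose j : ℝ)) :=
        Finset.sum_le_sum hterm
    _ ≤ ∑ j ∈ Finset.range (T+1), lam ^ k * ((p/lam) ^ j * (1 - p) ^ (T - j) * (T.choose j : ℝ)) := by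
        apply Finset.sum_le_sum_of_subset_of_nonneg
        · exact Finset.range_subset_range.2 hdT
        · intro j _ _; positivity
    _ = lam ^ k * (p/lam + (1 - p)) ^ T := by
        rw [add_pow, Finset.mul_sum]
    _ ≤ lam ^ k * Real.exp (-((lam-1)^2/(2*lam)) * k - k * Real.log lam) := by
        apply mul_le_mul_of_nonneg_left _ (by positivity)
        have hbase0 : (0:ℝ) ≤ p/lam + (1 - p) := by positivity
        have hbase : p/lam + (1 - p) ≤ Real.exp (p/lam - p) := by
          have := Real.add_one_le_exp (p/lam - p)
          linarith
        calc (p/lam + (1 - p)) ^ T ≤ (Real.exp (p/lam - p)) ^ T :=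
              pow_le_pow_left₀ hbase0 hbase T
          _ = Real.exp ((p/lam - p) * T) := by rw [← Real.exp_nat_mul]; ring_nf
          _ ≤ Real.exp (-((lam-1)^2/(2*lam)) * k - k * Real.log lam) := by
              apply Real.exp_le_exp.2
              have hfac : p - p/lam = p * (1 - 1/lam) := by ring
              have h1l : (0:ℝ) ≤ 1 - 1/lam := by
                have : 1/lam ≤ 1 := by rw [div_le_one hlam0]; linarith
                linarith
              have hTlow : (p - p/lam) * (lam * k / p) ≤ (p - p/lam) * T := by
                apply mul_le_mul_of_nonneg_left hT
                rw [hfac]; positivity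
              have hval : (p - p/lam) * (lam * k / p) = (lam - 1) * k := by
                field_simp
              have hlog := log_le_half lam hlam
              have hk0 : (0:ℝ) ≤ (k:ℝ) := Nat.cast_nonneg k
              have hkey : Real.log lam ≤ (lam - 1) - (lam-1)^2/(2*lam) := by
                have : (lam - 1/lam)/2 = (lam - 1) - (lam-1)^2/(2*lam) := by
                  field_simp; ring
                linarith [this ▸ hlog]
              nlinarith [mul_le_mul_of_nonneg_right hkey hk0]
    _ = Real.exp (-((lam-1)^2/(2*lam)) * k) := by
        rw [← Real.exp_log (show (0:ℝ) < lam ^ k by positivity), ← Real.exp_add,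
          Real.log_pow]
        ring_nf

end PropTail

/-- **Tail bound for propagation on undirected graphs (Lemma 6, first part).** Let `V_i` be the
set of vertices at graph distance exactly `i` from `v0` and `S_k = ∑_{i=1}^k |V_i|`. For every
`k ≥ 1` and `λ ≥ 2`, the probability that after `⌈λ k / p⌉` rounds some vertex at distance at
most `k` from `v0` is still uninformed is at most `S_k · exp(-((λ-1)²/(2λ)) k)`, which is at
most `S_k · exp(-λ k / 8)`. -/
theorem propagation_tail_bound {V Ω : Type} [Fintype V] [MeasurableSpace Ω]
    (P : Measure Ω) [IsProbabilityMeasure P] (p : ℝ) (hp0 : 0 < p) (hp1 : p ≤ 1)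
    (G : SimpleGraph V) (v0 : V) (coin : ℕ → V → V → Ω → Bool)
    (hcoin : PropagationCoins coin P p)
    (k : ℕ) (hk : 1 ≤ k) (lam : ℝ) (hlam : 2 ≤ lam) :
    P {ω | ∃ v, 1 ≤ G.dist v0 v ∧ G.dist v0 v ≤ k ∧
        ¬ informed G.Adj coin v0 ⌈lam * k / p⌉₊ v ω} ≤
      ENNReal.ofReal ((∑ i ∈ Finset.Icc 1 k, (Nat.card {v : V // G.dist v0 v = i} : ℝ)) *
        Real.exp (-((lam - 1) ^ 2 / (2 * lam)) * k)) ∧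
    (∑ i ∈ Finset.Icc 1 k, (Nat.card {v : V // G.dist v0 v = i} : ℝ)) *
        Real.exp (-((lam - 1) ^ 2 / (2 * lam)) * k) ≤
      (∑ i ∈ Finset.Icc 1 k, (Nat.card {v : V // G.dist v0 v = i} : ℝ)) *
        Real.exp (-(lam * k) / 8) := by
  classical
  obtain ⟨hm, hI, hprob⟩ := hcoin
  set T : ℕ := ⌈lam * k / p⌉₊ with hTdef
  have hT : lam * k / p ≤ (T : ℝ) := Nat.le_ceil _
  set c : ℝ := Real.exp (-((lam - 1) ^ 2 / (2 * lam)) * k) with hcdef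
  have hc0 : 0 ≤ c := Real.exp_nonneg _
  -- per-vertex bound
  have hvertex : ∀ v : V, 1 ≤ G.dist v0 v → G.dist v0 v ≤ k →
      P {ω | ¬ informed G.Adj coin v0 T v ω} ≤ ENNReal.ofReal c := by
    intro v h1 h2
    set d : ℕ := G.dist v0 v with hd
    obtain ⟨w, hw⟩ := SimpleGraph.exists_walk_of_dist_ne_zero
      (show G.dist v0 v ≠ 0 by omega)
    -- hw : w.length = G.dist v0 v = d
    set e : ℕ → V × V :=
      fun j => (w.getVert (min j (d-1)), w.getVert (min j (d-1) + 1)) with he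
    have hdet : ∀ t ω, informed G.Adj coin v0 t
        (w.getVert (min (PropTail.Np coin e t ω) d)) ω := by
      intro t
      induction t with
      | zero =>
        intro ω
        simp only [PropTail.Np_zero, Nat.zero_min, SimpleGraph.Walk.getVert_zero]
        show (v0 = v0)
        rfl
      | succ t ih =>
        intro ω
        set n : ℕ := PropTail.Np coin e t ω with hn
        cases hb : coin t (e n).1 (e n).2 ω with
        | false =>
          have hstep : PropTail.Np coin e (t+1) ω = n := by
            rw [PropTail.Np_succ, ← hn, hb]; simp
          rw [hstep]
          exact Or.inl (ih ω)
        | true =>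
          have hstep : PropTail.Np coin e (t+1) ω = n + 1 := by
            rw [PropTail.Np_succ, ← hn, hb]; simp
          rw [hstep]
          by_cases hnd : d ≤ n
          · have hmin1 : min (n+1) d = d := by omega
            have hmin2 : min n d = d := by omega
            rw [hmin1]
            have ih' := ih ω
            rw [← hn, hmin2] at ih'
            exact Or.inl ih'
          · push_neg at hnd
            have hmin1 : min (n+1) d = n + 1 := by omega
            have hmin2 : min n d = n := by omega
            have hmin3 : min n (d-1) = n := by omega
            rw [hmin1]
            have hen : e n = (w.getVert n, w.getVert (n+1)) := by
              rw [he]; simp only; rw [hmin3]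
            refine Or.inr ⟨w.getVert n, ?_, ?_, ?_⟩
            · exact w.adj_getVert_succ (by omega : n < w.length)
            · have ih' := ih ω
              rw [← hn, hmin2] at ih'
              exact ih'
            · rw [hen] at hb; exact hb
    have hgv : w.getVert d = v := by
      have := w.getVert_length
      rwa [hw] at this
    have hsub : {ω | ¬ informed G.Adj coin v0 T v ω} ⊆
        ⋃ j ∈ Finset.range d, PropTail.Np coin e T ⁻¹' {j} := by
      intro ω hω
      simp only [Set.mem_setOf_eq] at hω
      by_contra hmem
      simp only [Set.mem_iUnion, Set.mem_preimage, Set.mem_singleton_iff, Finset.mem_range,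
        not_exists] at hmem
      have hge : d ≤ PropTail.Np coin e T ω := by
        by_contra hlt
        push_neg at hlt
        exact hmem _ hlt rfl
      have := hdet T ω
      rw [min_eq_right hge, hgv] at this
      exact hω this
    calc P {ω | ¬ informed G.Adj coin v0 T v ω}
        ≤ P (⋃ j ∈ Finset.range d, PropTail.Np coin e T ⁻¹' {j}) := measure_mono hsub
      _ ≤ ∑ j ∈ Finset.range d, P (PropTail.Np coin e T ⁻¹' {j}) :=
          measure_biUnion_finset_le _ _
      _ = ENNReal.ofReal (∑ j ∈ Finset.range d,
            ((T.choose j : ℝ) * p ^ j * (1 - p) ^ (T - j))) := by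
          rw [ENNReal.ofReal_sum_of_nonneg (fun j _ => by
            have h1p : (0:ℝ) ≤ 1 - p := by linarith
            positivity)]
          exact Finset.sum_congr rfl fun j _ =>
            PropTail.Np_dist hp0.le hp1 coin e hm hI hprob T j
      _ ≤ ENNReal.ofReal c :=
          ENNReal.ofReal_le_ofReal
            (PropTail.chernoff_sum p lam hp0 hp1 k d T hk h2 hlam hT)
  -- union bound
  set A : Finset V :=
    Finset.univ.filter (fun v => 1 ≤ G.dist v0 v ∧ G.dist v0 v ≤ k) with hA
  have hsub2 : {ω | ∃ v, 1 ≤ G.dist v0 v ∧ G.dist v0 v ≤ k ∧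
      ¬ informed G.Adj coin v0 T v ω} ⊆
      ⋃ v ∈ A, {ω | ¬ informed G.Adj coin v0 T v ω} := by
    rintro ω ⟨v, h1, h2, h3⟩
    exact Set.mem_biUnion (Finset.mem_filter.2 ⟨Finset.mem_univ v, h1, h2⟩) h3
  have hcard : (A.card : ℝ) =
      ∑ i ∈ Finset.Icc 1 k, (Nat.card {v : V // G.dist v0 v = i} : ℝ) := by
    have h1 : A.card = ∑ i ∈ Finset.Icc 1 k,
        (A.filter (fun v => G.dist v0 v = i)).card := by
      apply Finset.card_eq_sum_card_fiberwise
      intro v hv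
      simp only [hA, Finset.mem_coe, Finset.mem_filter, Finset.mem_univ, true_and] at hv
      simp only [Finset.coe_Icc, Finset.mem_coe, Finset.mem_Icc, Set.mem_Icc]
      omega
    have h2 : ∀ i ∈ Finset.Icc 1 k, ((A.filter (fun v => G.dist v0 v = i)).card : ℝ) =
        (Nat.card {v : V // G.dist v0 v = i} : ℝ) := by
      intro i hi
      simp only [Finset.mem_Icc] at hi
      congr 1
      rw [Nat.card_eq_fintype_card, Fintype.card_subtype]
      congr 1
      ext v
      simp only [hA, Finset.mem_filter, Finset.mem_univ, true_and]
      constructor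
      · rintro ⟨-, h⟩; exact h
      · intro h; exact ⟨by omega, h⟩
    rw [h1]
    push_cast
    exact Finset.sum_congr rfl h2
  constructor
  · calc P {ω | ∃ v, 1 ≤ G.dist v0 v ∧ G.dist v0 v ≤ k ∧
        ¬ informed G.Adj coin v0 T v ω}
        ≤ P (⋃ v ∈ A, {ω | ¬ informed G.Adj coin v0 T v ω}) := measure_mono hsub2
      _ ≤ ∑ v ∈ A, P {ω | ¬ informed G.Adj coin v0 T v ω} := measure_biUnion_finset_le _ _
      _ ≤ ∑ v ∈ A, ENNReal.ofReal c := by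
          apply Finset.sum_le_sum
          intro v hv
          simp only [hA, Finset.mem_filter, Finset.mem_univ, true_and] at hv
          exact hvertex v hv.1 hv.2
      _ = (A.card : ℝ≥0∞) * ENNReal.ofReal c := by
          rw [Finset.sum_const, nsmul_eq_mul]
      _ = ENNReal.ofReal ((A.card : ℝ) * c) := by
          rw [ENNReal.ofReal_mul (Nat.cast_nonneg _), ENNReal.ofReal_natCast]
      _ = ENNReal.ofReal ((∑ i ∈ Finset.Icc 1 k,
            (Nat.card {v : V // G.dist v0 v = i} : ℝ)) * c) := by rw [hcard]
  · apply mul_le_mul_of_nonneg_left _ ?_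
    · apply Real.exp_le_exp.2
      have hk1 : (1:ℝ) ≤ (k:ℝ) := by exact_mod_cast hk
      have hkey : lam / 8 ≤ (lam - 1)^2 / (2*lam) := by
        rw [div_le_div_iff₀ (by norm_num) (by linarith)]
        nlinarith
      have := mul_le_mul_of_nonneg_right hkey (by linarith : (0:ℝ) ≤ (k:ℝ))
      nlinarith
    · apply Finset.sum_nonneg
      intro i _
      positivity
end

section
/- Consider the randomized information propagation process with transmission probability p on a finite connected undirected graph G with n ≥ 2 vertices, starting at any vertex v*. The expected number of rounds until all n vertices are informed is at most max{4·diam(G), 16·ln(2n)} / p, where diam(G) is the diameter of G (the maximum number of edges on a shortest path between any two vertices). -/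
open MeasureTheory ProbabilityTheory ENNReal

namespace PropagationAux

variable {V Ω : Type}

/-- Deterministic greedy progress along a path, driven by a coin table. -/
def runProg (d : ℕ) (u : ℕ → V) (c : ℕ → V → V → Bool) : ℕ → ℕ
  | 0 => 0
  | t + 1 =>
      if runProg d u c t < d ∧ c t (u (runProg d u c t)) (u (runProg d u c t + 1)) = true then
        runProg d u c t + 1
      else runProg d u c t

lemma runProg_le (d : ℕ) (u : ℕ → V) (c : ℕ → V → V → Bool) (t : ℕ) : runProg d u c t ≤ d := by
  induction t with
  | zero => exact Nat.zero_le _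
  | succ t ih =>
      rw [runProg]
      split_ifs with h
      · exact h.1
      · exact ih

lemma runProg_congr (d : ℕ) (u : ℕ → V) {c c' : ℕ → V → V → Bool} (t : ℕ)
    (h : ∀ s < t, ∀ a b, c s a b = c' s a b) : runProg d u c t = runProg d u c' t := by
  induction t with
  | zero => rfl
  | succ t ih =>
      have ih' := ih fun s hs => h s (hs.trans (Nat.lt_succ_self t))
      rw [runProg, runProg, ih', h t (Nat.lt_succ_self t)]

section Meas

variable [MeasurableSpace Ω] (coin : ℕ → V → V → Ω → Bool)

/-- Random greedy progress process along a path. -/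
def prog (d : ℕ) (u : ℕ → V) (t : ℕ) (ω : Ω) : ℕ :=
  runProg d u (fun s a b => coin s a b ω) t

lemma prog_zero (d : ℕ) (u : ℕ → V) (ω : Ω) : prog coin d u 0 ω = 0 := rfl

lemma prog_succ (d : ℕ) (u : ℕ → V) (t : ℕ) (ω : Ω) :
    prog coin d u (t + 1) ω =
      if prog coin d u t ω < d ∧
          coin t (u (prog coin d u t ω)) (u (prog coin d u t ω + 1)) ω = true then
        prog coin d u t ω + 1
      else prog coin d u t ω := rfl

lemma prog_le (d : ℕ) (u : ℕ → V) (t : ℕ) (ω : Ω) : prog coin d u t ω ≤ d :=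
  runProg_le _ _ _ _

lemma measurable_prog (hc : ∀ t a b, Measurable (coin t a b)) (d : ℕ) (u : ℕ → V) (t : ℕ) :
    Measurable (prog coin d u t) := by
  induction t with
  | zero =>
      have : prog coin d u 0 = fun _ => 0 := rfl
      rw [this]; exact measurable_const
  | succ t ih =>
      have hg : ∀ m : ℕ, Measurable fun ω =>
          (if m < d ∧ coin t (u m) (u (m + 1)) ω = true then m + 1 else m) := by
        intro m
        refine Measurable.ite ?_ measurable_const measurable_const
        have : {ω : Ω | m < d ∧ coin t (u m) (u (m + 1)) ω = true} =
            {ω : Ω | m < d} ∩ (coin t (u m) (u (m + 1)) ⁻¹' {true}) := by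
          ext ω; simp [Set.mem_setOf_eq]
        rw [this]
        exact (MeasurableSet.const _).inter ((hc t _ _) (measurableSet_singleton true))
      have h : Measurable fun p : Ω × ℕ =>
          (if p.2 < d ∧ coin t (u p.2) (u (p.2 + 1)) p.1 = true then p.2 + 1 else p.2) :=
        measurable_from_prod_countable_left hg
      have : Measurable fun ω => (fun p : Ω × ℕ =>
          (if p.2 < d ∧ coin t (u p.2) (u (p.2 + 1)) p.1 = true then p.2 + 1 else p.2))
          (ω, prog coin d u t ω) := h.comp (measurable_id.prodMk ih)
      convert this using 1
      funext ω
      exact prog_succ coin d u t ω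

lemma informed_prog {E : V → V → Prop} {v0 : V} {d : ℕ} {u : ℕ → V} (hu0 : u 0 = v0)
    (hadj : ∀ i < d, E (u i) (u (i + 1))) (t : ℕ) (ω : Ω) :
    informed E coin v0 t (u (prog coin d u t ω)) ω := by
  induction t with
  | zero => simp [prog_zero, informed, hu0]
  | succ t ih =>
      rw [prog_succ]
      split_ifs with h
      · exact Or.inr ⟨u (prog coin d u t ω), hadj _ h.1, ih, h.2⟩
      · exact Or.inl ih

lemma measurableSet_informed [Countable V] {E : V → V → Prop}
    (hc : ∀ t a b, Measurable (coin t a b)) (v0 : V) (t : ℕ) (v : V) :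
    MeasurableSet {ω : Ω | informed E coin v0 t v ω} := by
  induction t generalizing v with
  | zero => exact MeasurableSet.const _
  | succ t ih =>
      have : {ω : Ω | informed E coin v0 (t + 1) v ω} =
          {ω | informed E coin v0 t v ω} ∪
            ⋃ a : V, ({ω : Ω | E a v} ∩ {ω | informed E coin v0 t a ω} ∩
              (coin t a v ⁻¹' {true})) := by
        ext ω
        simp only [informed, Set.mem_union, Set.mem_setOf_eq, Set.mem_iUnion, Set.mem_inter_iff,
          Set.mem_preimage, Set.mem_singleton_iff]
        tauto
      rw [this]
      exact (ih v).union (MeasurableSet.iUnion fun a =>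
        ((MeasurableSet.const _).inter (ih a)).inter ((hc t a v) (measurableSet_singleton true)))

variable [Fintype V] (P : Measure Ω) [IsProbabilityMeasure P]

lemma indepFun_prog_coin (hmeas : ∀ t a b, Measurable (coin t a b))
    (hind : iIndepFun (fun j : ℕ × V × V => coin j.1 j.2.1 j.2.2) P)
    (d : ℕ) (u : ℕ → V) (t : ℕ) (a b : V) :
    IndepFun (prog coin d u t) (coin t a b) P := by
  classical
  set S : Finset (ℕ × V × V) := (Finset.range t) ×ˢ (Finset.univ ×ˢ Finset.univ) with hS
  set T : Finset (ℕ × V × V) := {(t, a, b)} with hT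
  have hdisj : Disjoint S T := by
    rw [hS, hT, Finset.disjoint_singleton_right]
    simp [Finset.mem_product]
  have hI := hind.indepFun_finset S T hdisj (fun j => hmeas j.1 j.2.1 j.2.2)
  set φ : (↥S → Bool) → ℕ := fun x =>
    runProg d u (fun s a' b' =>
      if h : ((s, a', b') : ℕ × V × V) ∈ S then x ⟨(s, a', b'), h⟩ else false) t with hφdef
  have hφ : prog coin d u t = fun ω => φ (fun i : ↥S => coin i.1.1 i.1.2.1 i.1.2.2 ω) := by
    funext ω
    rw [hφdef, prog]
    refine runProg_congr d u t fun s hs a' b' => ?_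
    have hmem : ((s, a', b') : ℕ × V × V) ∈ S := by
      rw [hS]
      simp [Finset.mem_product, hs]
    rw [dif_pos hmem]
  have hψ : (coin t a b) = (fun x : ↥T → Bool => x ⟨(t, a, b), Finset.mem_singleton_self _⟩) ∘
      (fun ω (i : ↥T) => coin i.1.1 i.1.2.1 i.1.2.2 ω) := rfl
  rw [hφ, hψ]
  exact hI.comp (measurable_of_finite φ) (measurable_of_finite _)

/-- The central estimate: the greedy progress along a path of length `d` is dominated by a
binomial-type recursion, giving an exponential bound on the lower tail. -/
lemma prog_lt_bound {p : ℝ} (hp0 : 0 < p) (hp1 : p ≤ 1)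
    (hmeascoin : ∀ t a b, Measurable (coin t a b))
    (hind : iIndepFun (fun j : ℕ × V × V => coin j.1 j.2.1 j.2.2) P)
    (hptrue : ∀ t a b, P {ω | coin t a b ω = true} = ENNReal.ofReal p)
    (d : ℕ) (u : ℕ → V) :
    ∀ t, ∀ j ≤ d, P {ω | prog coin d u t ω < j} ≤
      4 ^ j * (ENNReal.ofReal (1 - 3 * p / 4)) ^ t := by
  classical
  have hmeasprog := measurable_prog coin hmeascoin d u
  have hindep := indepFun_prog_coin coin P hmeascoin hind d u
  have hsucc := prog_succ coin d u
  set pe := ENNReal.ofReal p with hpe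
  set qe := ENNReal.ofReal (1 - p) with hqe
  set r := ENNReal.ofReal (1 - 3 * p / 4) with hr
  have hpq : pe + qe = 1 := by
    rw [hpe, hqe, ← ENNReal.ofReal_add hp0.le (by linarith)]; norm_num
  have hkey : pe + 4 * qe = 4 * r := by
    rw [hpe, hqe, hr, show (4 : ℝ≥0∞) = ENNReal.ofReal 4 by norm_num,
      ← ENNReal.ofReal_mul (by norm_num), ← ENNReal.ofReal_mul (by norm_num),
      ← ENNReal.ofReal_add hp0.le (by linarith)]
    congr 1; ring
  have hfalse : ∀ t a b, P {ω | coin t a b ω = false} = qe := by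
    intro t a b
    have hset : {ω | coin t a b ω = false} = {ω | coin t a b ω = true}ᶜ := by
      ext ω; simp [Bool.not_eq_true]
    have hms : MeasurableSet {ω | coin t a b ω = true} :=
      (hmeascoin t a b) (measurableSet_singleton true)
    rw [hset, measure_compl hms (measure_ne_top _ _), hptrue t a b,
      measure_univ, hqe, ← ENNReal.ofReal_one, ← ENNReal.ofReal_sub _ hp0.le]
  intro t
  induction t with
  | zero =>
      intro j hj
      match j with
      | 0 => simp
      | (j' + 1) =>
          have : P {ω | prog coin d u 0 ω < j' + 1} ≤ 1 := prob_le_one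
          refine this.trans ?_
          rw [pow_zero, mul_one]
          exact one_le_pow_of_one_le' (by norm_num) _
  | succ t ih =>
      intro j hj
      match j with
      | 0 => simp
      | (j' + 1) =>
          have hsetid : {ω | prog coin d u (t + 1) ω < j' + 1} =
              {ω | prog coin d u t ω < j'} ∪
                ({ω | prog coin d u t ω = j'} ∩
                  {ω | coin t (u j') (u (j' + 1)) ω = false}) := by
            ext ω
            simp only [Set.mem_union, Set.mem_inter_iff, Set.mem_setOf_eq, hsucc t ω]
            constructor
            · intro h
              rcases lt_trichotomy (prog coin d u t ω) j' with hm | hm | hm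
              · exact Or.inl hm
              · refine Or.inr ⟨hm, ?_⟩
                by_cases hcoin :
                    coin t (u (prog coin d u t ω)) (u (prog coin d u t ω + 1)) ω = true
                · rw [if_pos ⟨by omega, hcoin⟩] at h
                  omega
                · rw [hm] at hcoin
                  simpa using hcoin
              · split_ifs at h <;> omega
            · intro h
              rcases h with hm | ⟨hm, hcoin⟩
              · split_ifs <;> omega
              · rw [if_neg]
                · omega
                · rintro ⟨-, hc⟩
                  rw [hm, hcoin] at hc
                  simp at hc
          have hmB : MeasurableSet {ω | prog coin d u t ω = j'} :=
            (hmeasprog t) (measurableSet_singleton j')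
          have hmC : MeasurableSet {ω | coin t (u j') (u (j' + 1)) ω = false} :=
            (hmeascoin t _ _) (measurableSet_singleton false)
          have hdisj : Disjoint {ω | prog coin d u t ω < j'}
              ({ω | prog coin d u t ω = j'} ∩
                {ω | coin t (u j') (u (j' + 1)) ω = false}) := by
            rw [Set.disjoint_left]
            rintro ω h1 ⟨h2, -⟩
            rw [Set.mem_setOf_eq] at h1 h2
            omega
          have hBC : P ({ω | prog coin d u t ω = j'} ∩
              {ω | coin t (u j') (u (j' + 1)) ω = false}) =
              P {ω | prog coin d u t ω = j'} * qe := by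
            have := (hindep t (u j') (u (j' + 1))).measure_inter_preimage_eq_mul
              {j'} {false} (measurableSet_singleton _) (measurableSet_singleton _)
            rw [← hfalse t (u j') (u (j' + 1))]
            exact this
          have hsplit2 : P {ω | prog coin d u t ω < j' + 1} =
              P {ω | prog coin d u t ω < j'} + P {ω | prog coin d u t ω = j'} := by
            have : {ω | prog coin d u t ω < j' + 1} =
                {ω | prog coin d u t ω < j'} ∪ {ω | prog coin d u t ω = j'} := by
              ext ω; simp only [Set.mem_union, Set.mem_setOf_eq]; omega
            rw [this, measure_union _ hmB]
            rw [Set.disjoint_left]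
            intro ω h1 h2
            rw [Set.mem_setOf_eq] at h1 h2
            omega
          have heq' : P {ω | prog coin d u (t + 1) ω < j' + 1} =
              pe * P {ω | prog coin d u t ω < j'} +
                qe * P {ω | prog coin d u t ω < j' + 1} := by
            rw [hsetid, measure_union hdisj (hmB.inter hmC), hBC, hsplit2]
            have : pe * P {ω | prog coin d u t ω < j'} +
                qe * (P {ω | prog coin d u t ω < j'} + P {ω | prog coin d u t ω = j'}) =
                (pe + qe) * P {ω | prog coin d u t ω < j'} +
                  qe * P {ω | prog coin d u t ω = j'} := by ring
            rw [this, hpq, one_mul, mul_comm qe]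
          rw [heq']
          have h1 := ih j' (by omega)
          have h2 := ih (j' + 1) hj
          calc pe * P {ω | prog coin d u t ω < j'} +
              qe * P {ω | prog coin d u t ω < j' + 1}
              ≤ pe * (4 ^ j' * r ^ t) + qe * (4 ^ (j' + 1) * r ^ t) :=
                add_le_add (mul_le_mul_right h1 pe) (mul_le_mul_right h2 qe)
            _ = (pe + 4 * qe) * (4 ^ j' * r ^ t) := by ring
            _ = 4 ^ (j' + 1) * r ^ (t + 1) := by rw [hkey]; ring

end Meas

/-- Bounding the expected hitting time via tail probabilities. -/
lemma lintegral_iInf_le_tsum [MeasurableSpace Ω] (P : Measure Ω) [IsProbabilityMeasure P]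
    (don : ℕ → Ω → Prop) (hmeas : ∀ t, MeasurableSet {ω | ¬ don t ω}) :
    ∫⁻ ω, (⨅ (t : ℕ) (_ : don t ω), (t : ℝ≥0∞)) ∂P ≤ ∑' t, P {ω | ¬ don t ω} := by
  classical
  have hpt : ∀ ω, (⨅ (t : ℕ) (_ : don t ω), (t : ℝ≥0∞)) ≤
      ∑' t : ℕ, ({ω' | ¬ don t ω'}.indicator (fun _ => (1 : ℝ≥0∞)) ω) := by
    intro ω
    by_cases h : ∃ t, don t ω
    · set t0 := Nat.find h with ht0
      have hle : (⨅ (t : ℕ) (_ : don t ω), (t : ℝ≥0∞)) ≤ (t0 : ℝ≥0∞) :=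
        iInf₂_le t0 (Nat.find_spec h)
      refine hle.trans ?_
      have : ∀ s ∈ Finset.range t0,
          ({ω' | ¬ don s ω'}.indicator (fun _ => (1 : ℝ≥0∞)) ω) = 1 := by
        intro s hs
        rw [Finset.mem_range] at hs
        exact Set.indicator_of_mem
          (show ω ∈ {ω' | ¬ don s ω'} from Nat.find_min h hs) fun _ => (1 : ℝ≥0∞)
      calc (t0 : ℝ≥0∞) = ∑ s ∈ Finset.range t0,
            ({ω' | ¬ don s ω'}.indicator (fun _ => (1 : ℝ≥0∞)) ω) := by
            rw [Finset.sum_congr rfl this]; simp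
        _ ≤ _ := ENNReal.sum_le_tsum _
    · push_neg at h
      have : ∀ t : ℕ, ({ω' | ¬ don t ω'}.indicator (fun _ => (1 : ℝ≥0∞)) ω) = 1 := fun t =>
        Set.indicator_of_mem (show ω ∈ {ω' | ¬ don t ω'} from h t) fun _ => (1 : ℝ≥0∞)
      rw [tsum_congr this, ENNReal.tsum_const_eq_top_of_ne_zero one_ne_zero]
      exact le_top
  calc ∫⁻ ω, (⨅ (t : ℕ) (_ : don t ω), (t : ℝ≥0∞)) ∂P
      ≤ ∫⁻ ω, ∑' t : ℕ, ({ω' | ¬ don t ω'}.indicator (fun _ => (1 : ℝ≥0∞)) ω) ∂P :=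
        lintegral_mono hpt
    _ = ∑' t : ℕ, ∫⁻ ω, ({ω' | ¬ don t ω'}.indicator (fun _ => (1 : ℝ≥0∞)) ω) ∂P :=
        lintegral_tsum fun t => ((measurable_const.indicator (hmeas t)).aemeasurable)
    _ = ∑' t : ℕ, P {ω | ¬ don t ω} := by
        refine tsum_congr fun t => ?_
        rw [lintegral_indicator_const (hmeas t), one_mul]

/-- Splitting a tail-sum at `N` for a geometrically dominated sequence. -/
lemma tsum_le_of_geom (f : ℕ → ℝ≥0∞) (N : ℕ) (C r : ℝ≥0∞) (hhead : ∀ t, f t ≤ 1)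
    (htail : ∀ t, f t ≤ C * r ^ t) :
    ∑' t, f t ≤ N + C * r ^ N * (1 - r)⁻¹ := by
  have hsplit : ∀ t : ℕ, f t ≤ (if t < N then 1 else 0) + (if N ≤ t then C * r ^ t else 0) := by
    intro t
    by_cases h : t < N
    · simp only [if_pos h, if_neg (by omega : ¬ N ≤ t), add_zero]
      exact hhead t
    · simp only [if_neg h, if_pos (by omega : N ≤ t), zero_add]
      exact htail t
  calc ∑' t, f t ≤ ∑' t, ((if t < N then 1 else 0) + (if N ≤ t then C * r ^ t else 0)) :=
      ENNReal.tsum_le_tsum hsplit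
    _ = (∑' t : ℕ, (if t < N then (1:ℝ≥0∞) else 0)) +
        ∑' t : ℕ, (if N ≤ t then C * r ^ t else 0) := ENNReal.tsum_add
    _ ≤ N + C * r ^ N * (1 - r)⁻¹ := by
      apply add_le_add
      · have : ∑' t : ℕ, (if t < N then (1:ℝ≥0∞) else 0) =
            ∑ t ∈ Finset.range N, (if t < N then (1:ℝ≥0∞) else 0) :=
          tsum_eq_sum (fun t ht => if_neg (by simpa using ht))
        rw [this]
        rw [Finset.sum_ite_of_true (fun t ht => Finset.mem_range.mp ht)]
        simp
      · have hre : ∑' s : ℕ, (fun t => if N ≤ t then C * r ^ t else 0) (s + N) =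
            ∑' t : ℕ, (if N ≤ t then C * r ^ t else 0) := by
          refine Function.Injective.tsum_eq (add_left_injective N)
            (f := fun t => if N ≤ t then C * r ^ t else 0) ?_
          intro t ht
          simp only [Function.mem_support, ne_eq, ite_eq_right_iff, not_forall] at ht
          obtain ⟨h1, -⟩ := ht
          exact ⟨t - N, by show t - N + N = t; omega⟩
        rw [← hre]
        apply le_of_eq
        calc ∑' s : ℕ, (if N ≤ s + N then C * r ^ (s + N) else 0)
            = ∑' s : ℕ, r ^ s * (C * r ^ N) := by
              refine tsum_congr fun s => ?_
              rw [if_pos (by omega), pow_add]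
              ring
          _ = C * r ^ N * (1 - r)⁻¹ := by
              rw [ENNReal.tsum_mul_right, ENNReal.tsum_geometric]
              ring

/-- The final real-number estimate. -/
lemma final_arith (p : ℝ) (hp0 : 0 < p) (hp1 : p ≤ 1) (D n : ℕ) (hn : 2 ≤ n)
    (L : ℝ) (hLdef : L = Real.log (2 * n))
    (N : ℕ) (hNdef : N = ⌈(max (3 * (D:ℝ)) (8 * L)) / p⌉₊) :
    (N : ℝ) + (n : ℝ) * 4 ^ D * (1 - 3 * p / 4) ^ N * (3 * p / 4)⁻¹ ≤
      max (4 * (D:ℝ)) (16 * L) / p := by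
  have hn2 : (2 : ℝ) ≤ (n : ℝ) := by exact_mod_cast hn
  have hL : 1.38 ≤ L := by
    have h2 : (0.6931471803 : ℝ) < Real.log 2 := Real.log_two_gt_d9
    have h4 : Real.log 4 ≤ L := by
      rw [hLdef]
      apply Real.log_le_log (by norm_num)
      linarith
    have : Real.log 4 = Real.log 2 + Real.log 2 := by
      rw [← Real.log_mul (by norm_num) (by norm_num)]; norm_num
    linarith
  set M := max (3 * (D:ℝ)) (8 * L) with hM
  have hM3D : 3 * (D:ℝ) ≤ M := le_max_left _ _
  have hM8L : 8 * L ≤ M := le_max_right _ _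
  have hM0 : 0 ≤ M := le_trans (by positivity) hM3D
  have hNlow : M / p ≤ (N : ℝ) := by rw [hNdef]; exact Nat.le_ceil _
  have hNhigh : (N : ℝ) ≤ M / p + 1 := by
    rw [hNdef]
    exact (Nat.ceil_lt_add_one (by positivity)).le
  have hbase : 0 ≤ 1 - 3 * p / 4 := by linarith
  have hE1 : (1 - 3 * p / 4) ^ N ≤ Real.exp (-(3 * p / 4) * N) := by
    have h1 : 1 - 3 * p / 4 ≤ Real.exp (-(3 * p / 4)) := by
      have := Real.add_one_le_exp (-(3 * p / 4)); linarith
    calc (1 - 3 * p / 4) ^ N ≤ Real.exp (-(3 * p / 4)) ^ N := pow_le_pow_left₀ hbase h1 N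
      _ = Real.exp (-(3 * p / 4) * N) := by
          rw [← Real.exp_nat_mul]; ring_nf
  have hE2 : Real.exp (-(3 * p / 4) * N) ≤ Real.exp (-(3 / 2 * D + 2 * L)) := by
    apply Real.exp_le_exp.mpr
    have h34 : 3 / 4 * M ≤ 3 * p / 4 * N := by
      have h := mul_le_mul_of_nonneg_left hNlow (by linarith : (0:ℝ) ≤ 3 * p / 4)
      calc (3:ℝ) / 4 * M = 3 * p / 4 * (M / p) := by field_simp
        _ ≤ 3 * p / 4 * N := h
    have : 3 / 2 * (D:ℝ) + 2 * L ≤ 3 / 4 * M := by linarith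
    linarith
  have hexpL : Real.exp L = 2 * n := by
    rw [hLdef]; exact Real.exp_log (by positivity)
  have hE3 : Real.exp (-(3 / 2 * D + 2 * L)) =
      Real.exp (-(3 / 2) * D) * ((2 * (n:ℝ)) ^ 2)⁻¹ := by
    rw [show -(3 / 2 * (D:ℝ) + 2 * L) = -(3/2) * D + (-L + -L) by ring, Real.exp_add,
      Real.exp_add, Real.exp_neg, hexpL]
    ring
  have hE4 : (4:ℝ) ^ D * Real.exp (-(3 / 2) * D) ≤ 1 := by
    have h4e : 4 * Real.exp (-(3/2):ℝ) ≤ 1 := by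
      have he1 : (2.7182818283 : ℝ) < Real.exp 1 := Real.exp_one_gt_d9
      have he2 : (1.5 : ℝ) ≤ Real.exp (1/2 : ℝ) := by
        have := Real.add_one_le_exp ((1:ℝ)/2); linarith
      have h32 : (4 : ℝ) ≤ Real.exp (3/2 : ℝ) := by
        have : Real.exp (3/2 : ℝ) = Real.exp 1 * Real.exp (1/2 : ℝ) := by
          rw [← Real.exp_add]; norm_num
        nlinarith
      rw [Real.exp_neg]
      rw [mul_inv_le_iff₀ (by positivity)]
      linarith
    calc (4:ℝ) ^ D * Real.exp (-(3 / 2) * D) = (4 * Real.exp (-(3/2):ℝ)) ^ D := by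
          rw [mul_pow, ← Real.exp_nat_mul]; ring_nf
      _ ≤ 1 ^ D := pow_le_pow_left₀ (by positivity) h4e D
      _ = 1 := one_pow D
  have hS1 : (n : ℝ) * 4 ^ D * (1 - 3 * p / 4) ^ N ≤ ((4:ℝ) * n)⁻¹ := by
    have hc : (n : ℝ) * 4 ^ D * (1 - 3 * p / 4) ^ N ≤
        (n:ℝ) * ((2 * (n:ℝ)) ^ 2)⁻¹ * ((4:ℝ) ^ D * Real.exp (-(3 / 2) * D)) := by
      calc (n : ℝ) * 4 ^ D * (1 - 3 * p / 4) ^ N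
          ≤ (n : ℝ) * 4 ^ D * (Real.exp (-(3 / 2) * D) * ((2 * (n:ℝ)) ^ 2)⁻¹) := by
            apply mul_le_mul_of_nonneg_left _ (by positivity)
            rw [← hE3]
            exact hE1.trans hE2
        _ = (n:ℝ) * ((2 * (n:ℝ)) ^ 2)⁻¹ * ((4:ℝ) ^ D * Real.exp (-(3 / 2) * D)) := by ring
    have h2 : (n:ℝ) * ((2 * (n:ℝ)) ^ 2)⁻¹ * ((4:ℝ) ^ D * Real.exp (-(3 / 2) * D)) ≤
        (n:ℝ) * ((2 * (n:ℝ)) ^ 2)⁻¹ * 1 :=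
      mul_le_mul_of_nonneg_left hE4 (by positivity)
    have hn0' : (0:ℝ) < n := by linarith
    have h3 : (n:ℝ) * ((2 * (n:ℝ)) ^ 2)⁻¹ * 1 = ((4:ℝ) * n)⁻¹ := by
      field_simp
      ring
    linarith
  have hn0 : (0:ℝ) < n := by linarith
  have htail : (n : ℝ) * 4 ^ D * (1 - 3 * p / 4) ^ N * (3 * p / 4)⁻¹ ≤ (1/6) / p := by
    have hinv : (3 * p / 4)⁻¹ = (4/3) / p := by
      field_simp
    rw [hinv]
    have h8 : ((4:ℝ) * n)⁻¹ ≤ 1/8 := by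
      rw [inv_le_comm₀ (by positivity) (by norm_num)]
      norm_num
      linarith
    have := mul_le_mul_of_nonneg_right (hS1.trans h8) (by positivity : (0:ℝ) ≤ (4/3) / p)
    calc (n : ℝ) * 4 ^ D * (1 - 3 * p / 4) ^ N * ((4/3) / p) ≤ (1/8) * ((4/3)/p) := this
      _ = (1/6) / p := by ring
  have hhead : (N : ℝ) ≤ (M + 1) / p := by
    have h1p : 1 ≤ 1 / p := by
      rw [le_div_iff₀ hp0]; linarith
    have : M / p + 1 ≤ (M + 1) / p := by
      rw [add_div]
      linarith
    linarith
  have hfinal : M + 1 + 1/6 ≤ max (4 * (D:ℝ)) (16 * L) := by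
    rcases le_total (3 * (D:ℝ)) (8 * L) with h | h
    · have hMval : M = 8 * L := max_eq_right h
      have : 8 * L + 7/6 ≤ 16 * L := by linarith
      calc M + 1 + 1/6 = 8 * L + 7/6 := by rw [hMval]; ring
        _ ≤ 16 * L := this
        _ ≤ _ := le_max_right _ _
    · have hMval : M = 3 * (D:ℝ) := max_eq_left h
      have hD : (7:ℝ)/6 ≤ (D:ℝ) := by linarith
      calc M + 1 + 1/6 = 3 * (D:ℝ) + 7/6 := by rw [hMval]; ring
        _ ≤ 4 * (D:ℝ) := by linarith
        _ ≤ _ := le_max_left _ _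
  have hdiv : (M + 1) / p + (1/6) / p ≤ max (4 * (D:ℝ)) (16 * L) / p := by
    rw [← add_div]
    apply (div_le_div_iff_of_pos_right hp0).mpr
    linarith
  linarith

/-- Conversion of the final bound into `ℝ≥0∞`. -/
lemma ennreal_convert (p : ℝ) (hp0 : 0 < p) (hp1 : p ≤ 1) (n D N : ℕ) :
    (N : ℝ≥0∞) + (n : ℝ≥0∞) * 4 ^ D * (ENNReal.ofReal (1 - 3 * p / 4)) ^ N *
        (1 - ENNReal.ofReal (1 - 3 * p / 4))⁻¹ =
      ENNReal.ofReal ((N : ℝ) + (n : ℝ) * 4 ^ D * (1 - 3 * p / 4) ^ N * (3 * p / 4)⁻¹) := by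
  have hx : (0:ℝ) ≤ 1 - 3 * p / 4 := by linarith
  have h1r : 1 - ENNReal.ofReal (1 - 3 * p / 4) = ENNReal.ofReal (3 * p / 4) := by
    rw [← ENNReal.ofReal_one, ← ENNReal.ofReal_sub _ (by linarith)]
    norm_num
  have hB : (0:ℝ) ≤ (n : ℝ) * 4 ^ D * (1 - 3 * p / 4) ^ N :=
    mul_nonneg (mul_nonneg (Nat.cast_nonneg n) (by positivity)) (pow_nonneg hx N)
  rw [ENNReal.ofReal_add (Nat.cast_nonneg N) (mul_nonneg hB (by positivity)),
    ENNReal.ofReal_natCast,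
    ENNReal.ofReal_mul hB, ENNReal.ofReal_mul (mul_nonneg (Nat.cast_nonneg n) (by positivity)),
    ENNReal.ofReal_mul (Nat.cast_nonneg n), ENNReal.ofReal_natCast,
    ENNReal.ofReal_pow hx, ENNReal.ofReal_pow (by norm_num : (0:ℝ) ≤ 4),
    ENNReal.ofReal_inv_of_pos (by linarith : (0:ℝ) < 3 * p / 4), h1r]
  norm_num

end PropagationAux

/-- **Expected propagation time on connected undirected graphs.** On a finite connected
undirected graph with `n ≥ 2` vertices, the expected number of rounds until all vertices are
informed is at most `max{4 diam(G), 16 ln(2n)} / p`, where `diam(G)` is the diameter of `G`. -/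
theorem propagation_time_diameter {V Ω : Type} [Fintype V] [MeasurableSpace Ω]
    (P : Measure Ω) [IsProbabilityMeasure P] (p : ℝ) (hp0 : 0 < p) (hp1 : p ≤ 1)
    (G : SimpleGraph V) (hconn : G.Connected) (hn : 2 ≤ Fintype.card V)
    (v0 : V) (coin : ℕ → V → V → Ω → Bool) (hcoin : PropagationCoins coin P p) :
    ∫⁻ ω, (⨅ (t : ℕ) (_ : ∀ v, informed G.Adj coin v0 t v ω), (t : ℝ≥0∞)) ∂P ≤
      ENNReal.ofReal (max
          (4 * ((Finset.univ.sup fun u => Finset.univ.sup fun v => G.dist u v : ℕ) : ℝ))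
          (16 * Real.log (2 * Fintype.card V)) / p) := by
  classical
  obtain ⟨hmeascoin, hind, hptrue⟩ := hcoin
  set n := Fintype.card V with hncard
  set D : ℕ := Finset.univ.sup fun u => Finset.univ.sup fun v => G.dist u v with hDdef
  set L : ℝ := Real.log (2 * n) with hLdef
  set r : ℝ≥0∞ := ENNReal.ofReal (1 - 3 * p / 4) with hrdef
  set N : ℕ := ⌈(max (3 * (D:ℝ)) (8 * L)) / p⌉₊ with hNdef
  -- measurability of the events
  have hmeasinf : ∀ t v, MeasurableSet {ω : Ω | informed G.Adj coin v0 t v ω} :=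
    fun t v => PropagationAux.measurableSet_informed coin hmeascoin v0 t v
  have hmeasnot : ∀ t : ℕ,
      MeasurableSet {ω : Ω | ¬ ∀ v, informed G.Adj coin v0 t v ω} := by
    intro t
    have : {ω : Ω | ¬ ∀ v, informed G.Adj coin v0 t v ω} =
        ⋃ v : V, {ω : Ω | informed G.Adj coin v0 t v ω}ᶜ := by
      ext ω; simp [not_forall]
    rw [this]
    exact MeasurableSet.iUnion fun v => (hmeasinf t v).compl
  -- per-vertex tail bound
  have hvertex : ∀ (v : V) (t : ℕ),
      P {ω : Ω | ¬ informed G.Adj coin v0 t v ω} ≤ 4 ^ D * r ^ t := by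
    intro v t
    obtain ⟨w, hwlen⟩ := (hconn.preconnected v0 v).exists_walk_length_eq_dist
    set d : ℕ := G.dist v0 v with hd
    set u : ℕ → V := w.getVert with hu
    have hu0 : u 0 = v0 := w.getVert_zero
    have hud : u d = v := by
      rw [hu, ← hwlen]
      exact w.getVert_length
    have hadj : ∀ i < d, G.Adj (u i) (u (i + 1)) := by
      intro i hi
      exact w.adj_getVert_succ (by omega)
    have hsub : {ω : Ω | ¬ informed G.Adj coin v0 t v ω} ⊆
        {ω : Ω | PropagationAux.prog coin d u t ω < d} := by
      intro ω hω
      rw [Set.mem_setOf_eq] at hω ⊢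
      by_contra hlt
      have hEq : PropagationAux.prog coin d u t ω = d :=
        le_antisymm (PropagationAux.prog_le coin d u t ω) (by omega)
      have := PropagationAux.informed_prog coin hu0 hadj t ω
      rw [hEq, hud] at this
      exact hω this
    have hbound := PropagationAux.prog_lt_bound coin P hp0 hp1 hmeascoin hind hptrue d u t d
      le_rfl
    have hdD : d ≤ D := by
      calc d ≤ Finset.univ.sup fun v' => G.dist v0 v' :=
            Finset.le_sup (f := fun v' => G.dist v0 v') (Finset.mem_univ v)
        _ ≤ D := Finset.le_sup (f := fun u' => Finset.univ.sup fun v' => G.dist u' v')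
            (Finset.mem_univ v0)
    have hpow : (4:ℝ≥0∞) ^ d ≤ 4 ^ D := pow_le_pow_right₀ (by norm_num) hdD
    calc P {ω : Ω | ¬ informed G.Adj coin v0 t v ω}
        ≤ P {ω : Ω | PropagationAux.prog coin d u t ω < d} := measure_mono hsub
      _ ≤ 4 ^ d * r ^ t := hbound
      _ ≤ 4 ^ D * r ^ t := mul_le_mul_left hpow _
  -- union bound
  have hunion : ∀ t : ℕ, P {ω : Ω | ¬ ∀ v, informed G.Adj coin v0 t v ω} ≤
      (n : ℝ≥0∞) * (4 ^ D * r ^ t) := by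
    intro t
    have hset : {ω : Ω | ¬ ∀ v, informed G.Adj coin v0 t v ω} =
        ⋃ v : V, {ω : Ω | ¬ informed G.Adj coin v0 t v ω} := by
      ext ω; simp [not_forall]
    rw [hset]
    calc P (⋃ v : V, {ω : Ω | ¬ informed G.Adj coin v0 t v ω})
        ≤ ∑' v : V, P {ω : Ω | ¬ informed G.Adj coin v0 t v ω} := measure_iUnion_le _
      _ = ∑ v : V, P {ω : Ω | ¬ informed G.Adj coin v0 t v ω} := tsum_fintype _
      _ ≤ ∑ _v : V, 4 ^ D * r ^ t := Finset.sum_le_sum fun v _ => hvertex v t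
      _ = (n : ℝ≥0∞) * (4 ^ D * r ^ t) := by
          rw [Finset.sum_const, hncard]
          simp [nsmul_eq_mul]
  calc ∫⁻ ω, (⨅ (t : ℕ) (_ : ∀ v, informed G.Adj coin v0 t v ω), (t : ℝ≥0∞)) ∂P
      ≤ ∑' t : ℕ, P {ω : Ω | ¬ ∀ v, informed G.Adj coin v0 t v ω} :=
        PropagationAux.lintegral_iInf_le_tsum P _ hmeasnot
    _ ≤ (N : ℝ≥0∞) + ((n : ℝ≥0∞) * 4 ^ D) * r ^ N * (1 - r)⁻¹ := by
        apply PropagationAux.tsum_le_of_geom _ N ((n : ℝ≥0∞) * 4 ^ D) r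
          (fun t => prob_le_one)
        intro t
        rw [mul_assoc]
        exact hunion t
    _ = ENNReal.ofReal ((N : ℝ) + (n : ℝ) * 4 ^ D * (1 - 3 * p / 4) ^ N * (3 * p / 4)⁻¹) := by
        rw [← PropagationAux.ennreal_convert p hp0 hp1 n D N, hrdef]
    _ ≤ ENNReal.ofReal (max (4 * (D:ℝ)) (16 * L) / p) := by
        apply ENNReal.ofReal_le_ofReal
        exact PropagationAux.final_arith p hp0 hp1 D n hn L hLdef N hNdef
end

section
/- Consider the randomized information propagation process with transmission probability p on a finite strongly connected directed graph G with μ vertices, starting at any vertex v*. For every k with 1 ≤ k ≤ μ, the expected number of rounds until at least k vertices are informed is at most (k-1)/p. -/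
open MeasureTheory ProbabilityTheory ENNReal

section Aux

variable {V Ω : Type} (E : V → V → Prop) (coin : ℕ → V → V → Ω → Bool) (v0 : V)

lemma informed_v0 (t : ℕ) (ω : Ω) : informed E coin v0 t v0 ω := by
  induction t with
  | zero => simp [informed]
  | succ n ih => exact Or.inl ih

lemma informed_succ_of (t : ℕ) (v : V) (ω : Ω) (h : informed E coin v0 t v ω) :
    informed E coin v0 (t + 1) v ω := Or.inl h

lemma crossing (Q : V → Prop) :
    ∀ {a b : V}, Relation.ReflTransGen E a b → Q a → ¬ Q b →
      ∃ u w, Q u ∧ ¬ Q w ∧ E u w := by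
  intro a b h
  induction h with
  | refl => intro h1 h2; exact absurd h1 h2
  | @tail b c h1 h2 ih =>
    intro ha hc
    by_cases hb : Q b
    · exact ⟨b, c, hb, hc, h2⟩
    · exact ih ha hb

/-- The σ-algebra generated by the coins flipped strictly before time `t`. -/
def coinFiltration [MeasurableSpace Ω] (t : ℕ) : MeasurableSpace Ω :=
  ⨆ (j : ℕ × V × V) (_ : j.1 < t),
    MeasurableSpace.comap (coin j.1 j.2.1 j.2.2) inferInstance

variable [MeasurableSpace Ω]

lemma coinFiltration_mono {s t : ℕ} (h : s ≤ t) :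
    coinFiltration coin s ≤ coinFiltration coin t := by
  refine iSup₂_le fun j hj => ?_
  exact le_iSup₂ (f := fun (j : ℕ × V × V) (_ : j.1 < t) =>
    MeasurableSpace.comap (coin j.1 j.2.1 j.2.2) inferInstance) j (lt_of_lt_of_le hj h)

lemma coinFiltration_le (hmeas : ∀ t u v, Measurable (coin t u v)) (t : ℕ) :
    coinFiltration coin t ≤ ‹MeasurableSpace Ω› :=
  iSup₂_le fun j _ => (hmeas j.1 j.2.1 j.2.2).comap_le

lemma coin_event_mem (t : ℕ) (u v : V) :
    MeasurableSet[coinFiltration coin (t + 1)] {ω | coin t u v ω = true} := by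
  refine le_iSup₂ (f := fun (j : ℕ × V × V) (_ : j.1 < t + 1) =>
    MeasurableSpace.comap (coin j.1 j.2.1 j.2.2) inferInstance) (t, u, v) (Nat.lt_succ_self t)
    _ ?_
  exact ⟨{true}, trivial, rfl⟩

lemma informed_measurableSet [Fintype V] : ∀ (t : ℕ) (v : V),
    MeasurableSet[coinFiltration coin t] {ω | informed E coin v0 t v ω} := by
  intro t
  induction t with
  | zero =>
    intro v
    by_cases h : v = v0
    · simp only [informed, h, Set.setOf_true]
      exact @MeasurableSet.univ _ (coinFiltration coin 0)
    · simp only [informed, h, Set.setOf_false]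
      exact @MeasurableSet.empty _ (coinFiltration coin 0)
  | succ n ih =>
    intro v
    have : {ω | informed E coin v0 (n+1) v ω} =
        {ω | informed E coin v0 n v ω} ∪
        ⋃ u : V, ({ω | E u v ∧ informed E coin v0 n u ω ∧ coin n u v ω = true}) := by
      ext ω; simp only [informed, Set.mem_union, Set.mem_setOf_eq, Set.mem_iUnion]
    rw [this]
    refine MeasurableSet.union (coinFiltration_mono coin (Nat.le_succ n) _ (ih v)) ?_
    refine MeasurableSet.iUnion fun u => ?_
    by_cases hE : E u v
    · have : {ω | E u v ∧ informed E coin v0 n u ω ∧ coin n u v ω = true} =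
          {ω | informed E coin v0 n u ω} ∩ {ω | coin n u v ω = true} := by
        ext ω; simp [hE]
      rw [this]
      exact MeasurableSet.inter (coinFiltration_mono coin (Nat.le_succ n) _ (ih u))
        (coin_event_mem coin n u v)
    · have : {ω | E u v ∧ informed E coin v0 n u ω ∧ coin n u v ω = true} = ∅ := by
        ext ω; simp [hE]
      rw [this]; exact @MeasurableSet.empty _ (coinFiltration coin (n+1))



section Indep
variable {V Ω : Type} [Fintype V] [MeasurableSpace Ω] {P : MeasureTheory.Measure Ω}
  {coin : ℕ → V → V → Ω → Bool}

lemma coin_indep (hmeas : ∀ t u v, Measurable (coin t u v))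
    (hind : iIndepFun
      (fun j : ℕ × V × V => coin j.1 j.2.1 j.2.2) P)
    (t : ℕ) (u w : V) {B : Set Ω}
    (hB : MeasurableSet[coinFiltration coin t] B) :
    P (B ∩ {ω | coin t u w ω = true}) = P B * P {ω | coin t u w ω = true} := by
  classical
  set S : Finset (ℕ × V × V) := Finset.range t ×ˢ (Finset.univ ×ˢ Finset.univ) with hSdef
  have hmemS : ∀ j : ℕ × V × V, j ∈ S ↔ j.1 < t := by
    intro j; simp [hSdef, Finset.mem_product]
  have hdisj : Disjoint S ({(t, u, w)} : Finset (ℕ × V × V)) := by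
    rw [Finset.disjoint_singleton_right, hmemS]; omega
  have hindep := hind.indepFun_finset S {(t, u, w)} hdisj (fun j => hmeas j.1 j.2.1 j.2.2)
  rw [indepFun_iff_measure_inter_preimage_eq_mul] at hindep
  have hle : coinFiltration coin t ≤ MeasurableSpace.comap
      (fun a (i : S) => coin i.1.1 i.1.2.1 i.1.2.2 a) MeasurableSpace.pi := by
    refine iSup₂_le fun j hj => ?_
    have hjS : j ∈ S := (hmemS j).2 hj
    have heq : coin j.1 j.2.1 j.2.2 =
        (fun h : S → Bool => h ⟨j, hjS⟩) ∘ (fun a (i : S) => coin i.1.1 i.1.2.1 i.1.2.2 a) :=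
      rfl
    rw [heq, ← MeasurableSpace.comap_comp]
    exact MeasurableSpace.comap_mono (measurable_pi_apply (⟨j, hjS⟩ : S)).comap_le
  obtain ⟨sB, hsB, hBeq⟩ := hle B hB
  have hcoinset : {ω | coin t u w ω = true} =
      (fun a (i : ({(t, u, w)} : Finset (ℕ × V × V))) => coin i.1.1 i.1.2.1 i.1.2.2 a) ⁻¹'
        {h | h ⟨(t, u, w), Finset.mem_singleton_self _⟩ = true} := rfl
  have htm : MeasurableSet {h : ({(t, u, w)} : Finset (ℕ × V × V)) → Bool |
      h ⟨(t, u, w), Finset.mem_singleton_self _⟩ = true} :=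
    by
      have : {h : ({(t, u, w)} : Finset (ℕ × V × V)) → Bool |
          h ⟨(t, u, w), Finset.mem_singleton_self _⟩ = true} =
          (fun h : ({(t, u, w)} : Finset (ℕ × V × V)) → Bool =>
            h ⟨(t, u, w), Finset.mem_singleton_self _⟩) ⁻¹' {true} := by
        ext h; simp
      rw [this]
      exact (measurable_pi_apply _) (MeasurableSet.singleton true)
  rw [← hBeq, hcoinset]
  exact hindep sB _ hsB htm


end Indep

/-- **Propagation on strongly connected directed graphs.** On a finite strongly connected
directed graph with `μ` vertices, for every `1 ≤ k ≤ μ` the expected number of rounds until at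
least `k` vertices are informed is at most `(k - 1) / p`. -/
theorem propagation_strongly_connected {V Ω : Type} [Fintype V] [MeasurableSpace Ω]
    (P : Measure Ω) [IsProbabilityMeasure P] (p : ℝ) (hp0 : 0 < p) (hp1 : p ≤ 1)
    (E : V → V → Prop) (hconn : ∀ u v : V, Relation.ReflTransGen E u v)
    (v0 : V) (coin : ℕ → V → V → Ω → Bool) (hcoin : PropagationCoins coin P p)
    (k : ℕ) (hk1 : 1 ≤ k) (hk2 : k ≤ Fintype.card V) :
    ∫⁻ ω, (⨅ (t : ℕ) (_ : k ≤ Nat.card {v : V // informed E coin v0 t v ω}), (t : ℝ≥0∞)) ∂P ≤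
      ENNReal.ofReal (((k : ℝ) - 1) / p) := by
  classical
  obtain ⟨hmeas, hind, hprob⟩ := hcoin
  set N : ℕ → Ω → ℕ := fun t ω => (Finset.univ.filter fun v => informed E coin v0 t v ω).card
    with hNdef
  have hNcard : ∀ t (ω : Ω), Nat.card {v : V // informed E coin v0 t v ω} = N t ω := by
    intro t ω
    rw [Nat.card_eq_fintype_card, Fintype.card_subtype]
  set B : ℕ → Finset V → Set Ω :=
    fun t S => {ω | Finset.univ.filter (fun v => informed E coin v0 t v ω) = S} with hBdef
  -- measurability of the B's
  have hBF : ∀ t S, MeasurableSet[coinFiltration coin t] (B t S) := by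
    intro t S
    have hBeq : B t S = ⋂ v : V, {ω | informed E coin v0 t v ω ↔ v ∈ S} := by
      ext ω
      simp only [hBdef, Set.mem_setOf_eq, Set.mem_iInter, Finset.ext_iff, Finset.mem_filter,
        Finset.mem_univ, true_and]
    rw [hBeq]
    refine MeasurableSet.iInter fun v => ?_
    by_cases hv : v ∈ S
    · simp only [hv, iff_true]
      exact informed_measurableSet E coin v0 t v
    · have : {ω | informed E coin v0 t v ω ↔ v ∈ S} = {ω | informed E coin v0 t v ω}ᶜ := by
        ext ω; simp [hv]
      rw [this]
      exact (informed_measurableSet E coin v0 t v).compl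
  have hFle := coinFiltration_le coin hmeas
  have hBamb : ∀ t S, MeasurableSet (B t S) := fun t S => hFle t _ (hBF t S)
  have hBdisj : ∀ t, Pairwise (Function.onFun Disjoint (B t)) := by
    intro t S S' hSS'
    rw [Function.onFun, Set.disjoint_left]
    intro ω h1 h2
    exact hSS' (h1.symm.trans h2)
  have hBunion : ∀ t, (⋃ S : Finset V, B t S) = Set.univ := by
    intro t; ext ω
    simp only [Set.mem_iUnion, Set.mem_univ, iff_true]
    exact ⟨_, rfl⟩
  have hNset : ∀ t, {ω | N t ω < k} =
      ⋃ S : Finset V, if S.card < k then B t S else ∅ := by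
    intro t; ext ω
    simp only [Set.mem_setOf_eq, Set.mem_iUnion]
    constructor
    · intro h
      exact ⟨Finset.univ.filter fun v => informed E coin v0 t v ω, by rw [if_pos h]; rfl⟩
    · rintro ⟨S, hS⟩
      by_cases hc : S.card < k
      · rw [if_pos hc] at hS
        have : N t ω = S.card := by rw [hNdef]; exact congrArg Finset.card hS
        omega
      · rw [if_neg hc] at hS; exact absurd hS (Set.notMem_empty ω)
  have hNmeas : ∀ t, MeasurableSet {ω | N t ω < k} := by
    intro t
    rw [hNset t]
    refine MeasurableSet.iUnion fun S => ?_
    split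
    · exact hBamb t S
    · exact MeasurableSet.empty
  set q : ℕ → ℝ≥0∞ := fun t => P {ω | N t ω < k} with hqdef
  set g : ℕ → ℝ≥0∞ := fun t => ∫⁻ ω, ((k - N t ω : ℕ) : ℝ≥0∞) ∂P with hgdef
  -- splitting of integrals along the partition
  have hsplit : ∀ (t : ℕ) (f : Ω → ℝ≥0∞),
      ∫⁻ ω, f ω ∂P = ∑ S : Finset V, ∫⁻ ω in B t S, f ω ∂P := by
    intro t f
    rw [← setLIntegral_univ (μ := P), ← hBunion t,
      lintegral_iUnion (fun S => hBamb t S) (hBdisj t), tsum_fintype]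
  -- step B : the key one-step inequality
  have hkey : ∀ t, g (t + 1) + ENNReal.ofReal p * q t ≤ g t := by
    intro t
    have hq : q t = ∑ S : Finset V, (if S.card < k then P (B t S) else 0) := by
      rw [hqdef]
      simp only
      rw [hNset t, measure_iUnion ?disj ?msble, tsum_fintype]
      case disj =>
        intro S S' hSS'
        have := hBdisj t hSS'
        rw [Function.onFun] at this ⊢
        split <;> split <;> simp_all [Set.disjoint_left]
      case msble =>
        intro S; split
        · exact hBamb t S
        · exact MeasurableSet.empty
      refine Finset.sum_congr rfl fun S _ => ?_
      split <;> simp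
    have hg : g t = ∑ S : Finset V, ((k - S.card : ℕ) : ℝ≥0∞) * P (B t S) := by
      rw [hgdef]; simp only
      rw [hsplit t]
      refine Finset.sum_congr rfl fun S _ => ?_
      rw [setLIntegral_congr_fun (hBamb t S)
        (fun ω hω => ?_), setLIntegral_const]
      have : N t ω = S.card := congrArg Finset.card hω
      rw [this]
    have hSineq : ∀ S : Finset V,
        (∫⁻ ω in B t S, ((k - N (t + 1) ω : ℕ) : ℝ≥0∞) ∂P) +
          ENNReal.ofReal p * (if S.card < k then P (B t S) else 0) ≤
        ((k - S.card : ℕ) : ℝ≥0∞) * P (B t S) := by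
      intro S
      have hsub : ∀ ω, ω ∈ B t S → S ⊆ Finset.univ.filter
          (fun v => informed E coin v0 (t + 1) v ω) := by
        intro ω hω v hv
        have hvf : v ∈ Finset.univ.filter (fun v => informed E coin v0 t v ω) := by
          rw [hω]; exact hv
        exact Finset.mem_filter.2 ⟨Finset.mem_univ _,
          Or.inl (Finset.mem_filter.1 hvf).2⟩
      by_cases hcard : S.card < k
      · by_cases hv0 : v0 ∈ S
        · obtain ⟨w0, hw0⟩ : ∃ w0, w0 ∉ S := by
            by_contra h
            push_neg at h
            have : S = Finset.univ := Finset.eq_univ_iff_forall.2 h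
            rw [this, Finset.card_univ] at hcard
            omega
          obtain ⟨u, w, hu, hw, hE⟩ := crossing E (· ∈ S) (hconn v0 w0) hv0 hw0
          have hpt : ∀ ω ∈ B t S,
              ((k - N (t + 1) ω : ℕ) : ℝ≥0∞) +
                Set.indicator {ω' | coin t u w ω' = true} 1 ω ≤
              ((k - S.card : ℕ) : ℝ≥0∞) := by
            intro ω hω
            have hcle : S.card ≤ N (t + 1) ω := Finset.card_le_card (hsub ω hω)
            by_cases hc : coin t u w ω = true
            · have hwin : informed E coin v0 (t + 1) w ω := by
                refine Or.inr ⟨u, hE, ?_, hc⟩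
                have : u ∈ Finset.univ.filter (fun v => informed E coin v0 t v ω) := by
                  rw [hω]; exact hu
                exact (Finset.mem_filter.1 this).2
              have hins : insert w S ⊆ Finset.univ.filter
                  (fun v => informed E coin v0 (t + 1) v ω) :=
                Finset.insert_subset (Finset.mem_filter.2 ⟨Finset.mem_univ _, hwin⟩)
                  (hsub ω hω)
              have hc2 : S.card + 1 ≤ N (t + 1) ω := by
                have := Finset.card_le_card hins
                rwa [Finset.card_insert_of_notMem hw] at this
              have hind1 : Set.indicator {ω' | coin t u w ω' = true} (1 : Ω → ℝ≥0∞) ω = 1 :=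
                Set.indicator_of_mem (show ω ∈ {ω' | coin t u w ω' = true} from hc) _
              rw [hind1]
              have hnat : (k - N (t + 1) ω) + 1 ≤ k - S.card := by omega
              calc ((k - N (t + 1) ω : ℕ) : ℝ≥0∞) + 1
                  = (((k - N (t + 1) ω) + 1 : ℕ) : ℝ≥0∞) := by push_cast; ring
                _ ≤ ((k - S.card : ℕ) : ℝ≥0∞) := Nat.cast_le.2 hnat
            · have hind0 : Set.indicator {ω' | coin t u w ω' = true} (1 : Ω → ℝ≥0∞) ω = 0 :=
                Set.indicator_of_notMem (show ω ∉ {ω' | coin t u w ω' = true} from hc) _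
              rw [hind0, add_zero]
              exact Nat.cast_le.2 (Nat.sub_le_sub_left hcle k)
          have hcoinB : P (B t S ∩ {ω | coin t u w ω = true}) =
              P (B t S) * ENNReal.ofReal p := by
            rw [coin_indep hmeas hind t u w (hBF t S), hprob]
          have hcmeas : MeasurableSet {ω | coin t u w ω = true} :=
            (hmeas t u w) (MeasurableSet.singleton true)
          rw [if_pos hcard]
          calc (∫⁻ ω in B t S, ((k - N (t + 1) ω : ℕ) : ℝ≥0∞) ∂P) +
                ENNReal.ofReal p * P (B t S)
              = (∫⁻ ω in B t S, ((k - N (t + 1) ω : ℕ) : ℝ≥0∞) ∂P) +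
                P (B t S ∩ {ω | coin t u w ω = true}) := by rw [hcoinB, mul_comm]
            _ = (∫⁻ ω in B t S, ((k - N (t + 1) ω : ℕ) : ℝ≥0∞) ∂P) +
                ∫⁻ ω in B t S, Set.indicator {ω' | coin t u w ω' = true} 1 ω ∂P := by
                rw [lintegral_indicator_one hcmeas, Measure.restrict_apply hcmeas,
                  Set.inter_comm]
            _ = ∫⁻ ω in B t S, (((k - N (t + 1) ω : ℕ) : ℝ≥0∞) +
                Set.indicator {ω' | coin t u w ω' = true} 1 ω) ∂P := by
                rw [lintegral_add_right _ (measurable_one.indicator hcmeas)]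
            _ ≤ ∫⁻ _ in B t S, ((k - S.card : ℕ) : ℝ≥0∞) ∂P :=
                setLIntegral_mono' (hBamb t S) hpt
            _ = ((k - S.card : ℕ) : ℝ≥0∞) * P (B t S) := setLIntegral_const _ _
        · have hBempty : B t S = ∅ := by
            ext ω
            simp only [hBdef, Set.mem_setOf_eq, Set.mem_empty_iff_false, iff_false]
            intro h
            exact hv0 (h ▸ Finset.mem_filter.2 ⟨Finset.mem_univ _, informed_v0 E coin v0 t ω⟩)
          simp [hBempty]
      · rw [if_neg hcard, mul_zero, add_zero]
        have hzero : ∀ ω ∈ B t S, ((k - N (t + 1) ω : ℕ) : ℝ≥0∞) ≤ 0 := by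
          intro ω hω
          have hcle : S.card ≤ N (t + 1) ω := Finset.card_le_card (hsub ω hω)
          have : k - N (t + 1) ω = 0 := by omega
          simp [this]
        calc (∫⁻ ω in B t S, ((k - N (t + 1) ω : ℕ) : ℝ≥0∞) ∂P)
            ≤ ∫⁻ _ in B t S, (0 : ℝ≥0∞) ∂P := setLIntegral_mono' (hBamb t S) hzero
          _ = 0 := by simp
          _ ≤ ((k - S.card : ℕ) : ℝ≥0∞) * P (B t S) := zero_le
    calc g (t + 1) + ENNReal.ofReal p * q t
        = (∑ S : Finset V, ∫⁻ ω in B t S, ((k - N (t + 1) ω : ℕ) : ℝ≥0∞) ∂P) +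
          ∑ S : Finset V, ENNReal.ofReal p * (if S.card < k then P (B t S) else 0) := by
          rw [hgdef]; simp only
          rw [hsplit t (fun ω => ((k - N (t + 1) ω : ℕ) : ℝ≥0∞)), hq, Finset.mul_sum]
      _ = ∑ S : Finset V, ((∫⁻ ω in B t S, ((k - N (t + 1) ω : ℕ) : ℝ≥0∞) ∂P) +
          ENNReal.ofReal p * (if S.card < k then P (B t S) else 0)) := by
          rw [Finset.sum_add_distrib]
      _ ≤ ∑ S : Finset V, ((k - S.card : ℕ) : ℝ≥0∞) * P (B t S) :=
          Finset.sum_le_sum fun S _ => hSineq S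
      _ = g t := hg.symm
  -- step C : iterate
  have hiter : ∀ T : ℕ, ENNReal.ofReal p * ∑ t ∈ Finset.range T, q t + g T ≤ g 0 := by
    intro T
    induction T with
    | zero => simp
    | succ n ih =>
      rw [Finset.sum_range_succ, mul_add]
      calc ENNReal.ofReal p * ∑ t ∈ Finset.range n, q t + ENNReal.ofReal p * q n + g (n + 1)
          = ENNReal.ofReal p * ∑ t ∈ Finset.range n, q t +
            (g (n + 1) + ENNReal.ofReal p * q n) := by ring
        _ ≤ ENNReal.ofReal p * ∑ t ∈ Finset.range n, q t + g n :=
            add_le_add le_rfl (hkey n)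
        _ ≤ g 0 := ih
  have hg0 : g 0 = ((k - 1 : ℕ) : ℝ≥0∞) := by
    have hN0 : ∀ ω : Ω, N 0 ω = 1 := by
      intro ω
      rw [hNdef]
      simp only [informed]
      rw [Finset.card_eq_one]; exact ⟨v0, by ext v; exact Finset.mem_filter.trans (by simp [informed])⟩
    rw [hgdef]
    simp only
    have hco : ∀ ω : Ω, ((k - N 0 ω : ℕ) : ℝ≥0∞) = ((k - 1 : ℕ) : ℝ≥0∞) := by
      intro ω; rw [hN0 ω]
    rw [lintegral_congr hco, lintegral_const, measure_univ, mul_one]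
  -- step D : sum the series
  have htsum : ∑' t, q t ≤ ENNReal.ofReal (((k : ℝ) - 1) / p) := by
    have hcast : ((k - 1 : ℕ) : ℝ≥0∞) = ENNReal.ofReal ((k : ℝ) - 1) := by
      rw [← ENNReal.ofReal_natCast]
      congr 1
      push_cast [Nat.cast_sub hk1]
      ring
    rw [ENNReal.ofReal_div_of_pos hp0, ENNReal.le_div_iff_mul_le
      (Or.inl (by simp [hp0, hp0.le])) (Or.inl ENNReal.ofReal_ne_top)]
    rw [← ENNReal.tsum_mul_right]
    rw [ENNReal.tsum_eq_iSup_sum]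
    refine iSup_le fun s => ?_
    obtain ⟨n, hn⟩ := Finset.exists_nat_subset_range s
    calc ∑ t ∈ s, q t * ENNReal.ofReal p
        ≤ ∑ t ∈ Finset.range n, q t * ENNReal.ofReal p :=
          Finset.sum_le_sum_of_subset hn
      _ = ENNReal.ofReal p * ∑ t ∈ Finset.range n, q t := by
          rw [← Finset.sum_mul, mul_comm]
      _ ≤ g 0 := le_trans (le_add_right le_rfl) (hiter n)
      _ = ENNReal.ofReal ((k : ℝ) - 1) := by rw [hg0, hcast]
  -- step A : pointwise bound and conclusion
  have hpoint : ∀ ω : Ω,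
      (⨅ (t : ℕ) (_ : k ≤ Nat.card {v : V // informed E coin v0 t v ω}), (t : ℝ≥0∞)) ≤
      ∑' t : ℕ, Set.indicator {ω' | N t ω' < k} (1 : Ω → ℝ≥0∞) ω := by
    intro ω
    by_cases h : ∃ t, k ≤ N t ω
    · set m := Nat.find h with hm
      have hmspec : k ≤ N m ω := Nat.find_spec h
      have hmin : ∀ t, t < m → N t ω < k := fun t ht => by
        have := Nat.find_min h ht
        omega
      calc (⨅ (t : ℕ) (_ : k ≤ Nat.card {v : V // informed E coin v0 t v ω}), (t : ℝ≥0∞))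
          ≤ (m : ℝ≥0∞) := by
            refine iInf_le_of_le m (iInf_le_of_le ?_ le_rfl)
            rw [hNcard]; exact hmspec
        _ = ∑ t ∈ Finset.range m, Set.indicator {ω' | N t ω' < k} (1 : Ω → ℝ≥0∞) ω := by
            have hones : ∀ t ∈ Finset.range m,
                Set.indicator {ω' | N t ω' < k} (1 : Ω → ℝ≥0∞) ω = 1 := fun t ht =>
              Set.indicator_of_mem
                (show ω ∈ {ω' | N t ω' < k} from hmin t (Finset.mem_range.1 ht)) _
            rw [Finset.sum_congr rfl hones]
            simp
        _ ≤ ∑' t : ℕ, Set.indicator {ω' | N t ω' < k} (1 : Ω → ℝ≥0∞) ω :=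
            ENNReal.sum_le_tsum _
    · push_neg at h
      have hone : ∀ t : ℕ, Set.indicator {ω' | N t ω' < k} (1 : Ω → ℝ≥0∞) ω = 1 := fun t =>
        Set.indicator_of_mem (show ω ∈ {ω' | N t ω' < k} from h t) _
      rw [tsum_congr hone, ENNReal.tsum_const_eq_top_of_ne_zero one_ne_zero]
      exact le_top
  calc ∫⁻ ω, (⨅ (t : ℕ) (_ : k ≤ Nat.card {v : V // informed E coin v0 t v ω}), (t : ℝ≥0∞)) ∂P
      ≤ ∫⁻ ω, ∑' t : ℕ, Set.indicator {ω' | N t ω' < k} (1 : Ω → ℝ≥0∞) ω ∂P :=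
        lintegral_mono hpoint
    _ = ∑' t : ℕ, ∫⁻ ω, Set.indicator {ω' | N t ω' < k} (1 : Ω → ℝ≥0∞) ω ∂P :=
        lintegral_tsum fun t => (measurable_one.indicator (hNmeas t)).aemeasurable
    _ = ∑' t : ℕ, q t := by
        refine tsum_congr fun t => ?_
        rw [lintegral_indicator_one (hNmeas t)]
    _ ≤ ENNReal.ofReal (((k : ℝ) - 1) / p) := htsum
end Aux
end

section
/- Consider the randomized information propagation process with transmission probability p on the bidirectional ring (undirected cycle graph) with μ ≥ 3 vertices, starting at any vertex v*. For every k with 1 ≤ k ≤ μ, the expected number of rounds until at least k vertices are informed is at most k/(2p). -/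
open MeasureTheory ProbabilityTheory ENNReal

section Aux
variable {Ω : Type} [MeasurableSpace Ω] {μ : ℕ}

def rrP (coin : ℕ → ZMod μ → ZMod μ → Ω → Bool) (v0 : ZMod μ) : ℕ → Ω → ℕ
  | 0, _ => 0
  | t+1, ω => rrP coin v0 t ω +
      (if coin t (v0 + (rrP coin v0 t ω : ℕ)) (v0 + (rrP coin v0 t ω : ℕ) + 1) ω = true then 1 else 0)

def llP (coin : ℕ → ZMod μ → ZMod μ → Ω → Bool) (v0 : ZMod μ) : ℕ → Ω → ℕ
  | 0, _ => 0
  | t+1, ω => llP coin v0 t ω +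
      (if coin t (v0 - (llP coin v0 t ω : ℕ)) (v0 - (llP coin v0 t ω : ℕ) - 1) ω = true then 1 else 0)

def FF (coin : ℕ → ZMod μ → ZMod μ → Ω → Bool) (t : ℕ) : MeasurableSpace Ω :=
  ⨆ j ∈ {j : ℕ × ZMod μ × ZMod μ | j.1 < t}, MeasurableSpace.comap (coin j.1 j.2.1 j.2.2) ⊤

lemma FF_mono (coin : ℕ → ZMod μ → ZMod μ → Ω → Bool) {s t : ℕ} (h : s ≤ t) :
    FF coin s ≤ FF coin t := by
  refine iSup₂_le fun j hj => ?_
  exact le_iSup₂ (f := fun (j : ℕ × ZMod μ × ZMod μ)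
    (_ : j ∈ {j : ℕ × ZMod μ × ZMod μ | j.1 < t}) => MeasurableSpace.comap (coin j.1 j.2.1 j.2.2) ⊤)
    j (lt_of_lt_of_le hj h)

lemma FF_le (coin : ℕ → ZMod μ → ZMod μ → Ω → Bool) (hm : ∀ t u v, Measurable (coin t u v))
    (t : ℕ) : FF coin t ≤ ‹MeasurableSpace Ω› := by
  refine iSup₂_le fun j _ => ?_
  exact MeasurableSpace.comap_le_iff_le_map.mpr fun s _ => (hm j.1 j.2.1 j.2.2) trivial

lemma measurableSet_coin_preimage (coin : ℕ → ZMod μ → ZMod μ → Ω → Bool) {s t : ℕ} (hst : s < t)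
    (u v : ZMod μ) (B : Set Bool) : MeasurableSet[FF coin t] (coin s u v ⁻¹' B) := by
  have h1 : MeasurableSet[MeasurableSpace.comap (coin s u v) ⊤] (coin s u v ⁻¹' B) :=
    ⟨B, trivial, rfl⟩
  exact (le_iSup₂ (f := fun (j : ℕ × ZMod μ × ZMod μ)
    (_ : j ∈ {j : ℕ × ZMod μ × ZMod μ | j.1 < t}) => MeasurableSpace.comap (coin j.1 j.2.1 j.2.2) ⊤)
    (s, u, v) hst) _ h1

end Aux

section Aux2
set_option linter.unusedSectionVars false
variable {Ω : Type} [MeasurableSpace Ω] {μ : ℕ}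
variable (coin : ℕ → ZMod μ → ZMod μ → Ω → Bool) (v0 : ZMod μ)

lemma measurableSet_rrP (t a : ℕ) : MeasurableSet[FF coin t] {ω | rrP coin v0 t ω = a} := by
  induction t generalizing a with
  | zero =>
    simp only [rrP]
    exact MeasurableSet.const _
  | succ t ih =>
    have : {ω | rrP coin v0 (t+1) ω = a} = ⋃ n : ℕ, ({ω | rrP coin v0 t ω = n} ∩
        (coin t (v0 + (n:ZMod μ)) (v0 + (n:ZMod μ) + 1) ⁻¹'
          {b : Bool | n + (if b = true then 1 else 0) = a})) := by
      ext ω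
      simp only [Set.mem_setOf_eq, Set.mem_iUnion, Set.mem_inter_iff, Set.mem_preimage]
      constructor
      · intro h; exact ⟨rrP coin v0 t ω, rfl, h⟩
      · rintro ⟨n, hn, h⟩; rw [rrP, hn]; exact h
    rw [this]
    exact MeasurableSet.iUnion fun n =>
      ((FF_mono coin (Nat.le_succ t)) _ (ih n)).inter
        (measurableSet_coin_preimage coin (Nat.lt_succ_self t) _ _ _)

lemma measurableSet_llP (t a : ℕ) : MeasurableSet[FF coin t] {ω | llP coin v0 t ω = a} := by
  induction t generalizing a with
  | zero =>
    simp only [llP]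
    exact MeasurableSet.const _
  | succ t ih =>
    have : {ω | llP coin v0 (t+1) ω = a} = ⋃ n : ℕ, ({ω | llP coin v0 t ω = n} ∩
        (coin t (v0 - (n:ZMod μ)) (v0 - (n:ZMod μ) - 1) ⁻¹'
          {b : Bool | n + (if b = true then 1 else 0) = a})) := by
      ext ω
      simp only [Set.mem_setOf_eq, Set.mem_iUnion, Set.mem_inter_iff, Set.mem_preimage]
      constructor
      · intro h; exact ⟨llP coin v0 t ω, rfl, h⟩
      · rintro ⟨n, hn, h⟩; rw [llP, hn]; exact h
    rw [this]
    exact MeasurableSet.iUnion fun n =>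
      ((FF_mono coin (Nat.le_succ t)) _ (ih n)).inter
        (measurableSet_coin_preimage coin (Nat.lt_succ_self t) _ _ _)

/-- The informed-arc width process. -/
def SSP (t : ℕ) (ω : Ω) : ℕ := rrP coin v0 t ω + llP coin v0 t ω

lemma measurableSet_SSP_eq (t c : ℕ) : MeasurableSet[FF coin t] {ω | SSP coin v0 t ω = c} := by
  have : {ω | SSP coin v0 t ω = c} = ⋃ (n : ℕ) (m : ℕ) (_ : n + m = c),
      ({ω | rrP coin v0 t ω = n} ∩ {ω | llP coin v0 t ω = m}) := by
    ext ω
    simp only [SSP, Set.mem_setOf_eq, Set.mem_iUnion, Set.mem_inter_iff]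
    constructor
    · intro h; exact ⟨_, _, h, rfl, rfl⟩
    · rintro ⟨n, m, h, h1, h2⟩; rw [h1, h2]; exact h
  rw [this]
  exact MeasurableSet.iUnion fun n => MeasurableSet.iUnion fun m => MeasurableSet.iUnion fun _ =>
    (measurableSet_rrP coin v0 t n).inter (measurableSet_llP coin v0 t m)

lemma measurableSet_SSP_le (t c : ℕ) : MeasurableSet[FF coin t] {ω | SSP coin v0 t ω ≤ c} := by
  have : {ω | SSP coin v0 t ω ≤ c} = ⋃ (d : ℕ) (_ : d ≤ c), {ω | SSP coin v0 t ω = d} := by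
    ext ω; simp
  rw [this]
  exact MeasurableSet.iUnion fun d => MeasurableSet.iUnion fun _ => measurableSet_SSP_eq coin v0 t d

end Aux2

section Aux3
set_option linter.unusedSectionVars false
variable {Ω : Type} [MeasurableSpace Ω] {μ : ℕ}
variable {coin : ℕ → ZMod μ → ZMod μ → Ω → Bool} {v0 : ZMod μ}
variable {P : Measure Ω} [IsProbabilityMeasure P] {p : ℝ}

lemma fresh (hcoin : PropagationCoins coin P p) (t : ℕ) (u v : ZMod μ) {A : Set Ω}
    (hA : MeasurableSet[FF coin t] A) :
    P (A ∩ {ω | coin t u v ω = true}) = ENNReal.ofReal p * P A := by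
  obtain ⟨hm, hind, hp⟩ := hcoin
  have hind' : iIndep (fun j : ℕ × ZMod μ × ZMod μ =>
      MeasurableSpace.comap (coin j.1 j.2.1 j.2.2) ⊤) P :=
    (iIndepFun_iff_iIndep _ _ _).mp hind
  have hdisj : Disjoint {j : ℕ × ZMod μ × ZMod μ | j.1 < t} ({(t, u, v)} : Set _) := by
    rw [Set.disjoint_singleton_right]
    simp
  have hle : ∀ j : ℕ × ZMod μ × ZMod μ,
      MeasurableSpace.comap (coin j.1 j.2.1 j.2.2) ⊤ ≤ ‹MeasurableSpace Ω› := fun j =>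
    MeasurableSpace.comap_le_iff_le_map.mpr fun s _ => (hm j.1 j.2.1 j.2.2) trivial
  have hIndep : Indep (FF coin t) (MeasurableSpace.comap (coin t u v) ⊤) P := by
    have := indep_iSup_of_disjoint hle hind' hdisj
    rwa [iSup_singleton] at this
  have hB : MeasurableSet[MeasurableSpace.comap (coin t u v) ⊤] {ω | coin t u v ω = true} :=
    ⟨{b | b = true}, trivial, rfl⟩
  rw [(Indep_iff _ _ _).mp hIndep A _ hA hB, hp t u v, mul_comm]

lemma fresh_adapt (hcoin : PropagationCoins coin P p) (t : ℕ) (g : ℕ → ZMod μ × ZMod μ)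
    (q : Ω → ℕ) (C : Set Ω) (hq : ∀ a, MeasurableSet[FF coin t] {ω | q ω = a})
    (hC : MeasurableSet[FF coin t] C) :
    P (C ∩ {ω | coin t (g (q ω)).1 (g (q ω)).2 ω = true}) = ENNReal.ofReal p * P C := by
  have hle := FF_le coin hcoin.1
  have hdec : C ∩ {ω | coin t (g (q ω)).1 (g (q ω)).2 ω = true} =
      ⋃ a : ℕ, (({ω | q ω = a} ∩ C) ∩ {ω | coin t (g a).1 (g a).2 ω = true}) := by
    ext ω
    simp only [Set.mem_inter_iff, Set.mem_setOf_eq, Set.mem_iUnion]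
    constructor
    · rintro ⟨h1, h2⟩; exact ⟨q ω, ⟨rfl, h1⟩, h2⟩
    · rintro ⟨a, ⟨ha, h1⟩, h2⟩; rw [← ha] at h2; exact ⟨h1, h2⟩
  have hdisj : Pairwise (Function.onFun Disjoint fun a : ℕ =>
      (({ω | q ω = a} ∩ C) ∩ {ω | coin t (g a).1 (g a).2 ω = true})) := by
    intro a b hab
    refine Set.disjoint_left.mpr fun ω h1 h2 => hab ?_
    rw [← h1.1.1, ← h2.1.1]
  have hmeasset : ∀ a : ℕ, MeasurableSet
      (({ω | q ω = a} ∩ C) ∩ {ω | coin t (g a).1 (g a).2 ω = true}) := fun a =>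
    ((hle t _ ((hq a).inter hC))).inter
      ((hcoin.1 t (g a).1 (g a).2) (by trivial : MeasurableSet {b | b = true}))
  have hdisj2 : Pairwise (Function.onFun Disjoint fun a : ℕ => ({ω | q ω = a} ∩ C)) := by
    intro a b hab
    refine Set.disjoint_left.mpr fun ω h1 h2 => hab ?_
    rw [← h1.1, ← h2.1]
  have hC_dec : C = ⋃ a : ℕ, ({ω | q ω = a} ∩ C) := by
    ext ω; simp only [Set.mem_iUnion, Set.mem_inter_iff, Set.mem_setOf_eq]
    exact ⟨fun h => ⟨q ω, rfl, h⟩, fun ⟨a, _, h⟩ => h⟩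
  calc P (C ∩ {ω | coin t (g (q ω)).1 (g (q ω)).2 ω = true})
      = ∑' a : ℕ, P (({ω | q ω = a} ∩ C) ∩ {ω | coin t (g a).1 (g a).2 ω = true}) := by
        rw [hdec, measure_iUnion hdisj hmeasset]
    _ = ∑' a : ℕ, ENNReal.ofReal p * P ({ω | q ω = a} ∩ C) := by
        congr 1; ext a; exact fresh hcoin t (g a).1 (g a).2 ((hq a).inter hC)
    _ = ENNReal.ofReal p * ∑' a : ℕ, P ({ω | q ω = a} ∩ C) := ENNReal.tsum_mul_left
    _ = ENNReal.ofReal p * P C := by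
        rw [← measure_iUnion hdisj2 fun a => hle t _ ((hq a).inter hC), ← hC_dec]

end Aux3

section Aux4
set_option linter.unusedSectionVars false
variable {Ω : Type} [MeasurableSpace Ω] {μ : ℕ}
variable (coin : ℕ → ZMod μ → ZMod μ → Ω → Bool) (v0 : ZMod μ)

lemma one_ne_zero_zmod (hμ : 3 ≤ μ) : (1 : ZMod μ) ≠ 0 := by
  intro h
  have : ((1 : ℕ) : ZMod μ) = 0 := by exact_mod_cast h
  rw [ZMod.natCast_eq_zero_iff, Nat.dvd_one] at this
  omega

lemma informed_right (hμ : 3 ≤ μ) (ω : Ω) :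
    ∀ t i, i ≤ rrP coin v0 t ω →
      informed (SimpleGraph.fromRel fun u v : ZMod μ => v = u + 1).Adj coin v0 t
        (v0 + (i : ZMod μ)) ω := by
  intro t
  induction t with
  | zero =>
    intro i hi
    simp only [rrP, Nat.le_zero] at hi
    subst hi
    show (v0 + ((0:ℕ) : ZMod μ)) = v0
    simp
  | succ t ih =>
    intro i hi
    by_cases h : i ≤ rrP coin v0 t ω
    · exact Or.inl (ih i h)
    · rw [rrP] at hi
      split_ifs at hi with hc
      · have hieq : i = rrP coin v0 t ω + 1 := by omega
        refine Or.inr ⟨v0 + (rrP coin v0 t ω : ZMod μ), ?_, ih _ le_rfl, ?_⟩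
        · rw [SimpleGraph.fromRel_adj]
          constructor
          · intro hh
            apply one_ne_zero_zmod hμ
            rw [hieq] at hh
            push_cast at hh
            linear_combination -hh
          · left
            rw [hieq]; push_cast; ring
        · rw [hieq] at hi ⊢
          push_cast
          convert hc using 2
          ring
      · omega

lemma informed_left (hμ : 3 ≤ μ) (ω : Ω) :
    ∀ t i, i ≤ llP coin v0 t ω →
      informed (SimpleGraph.fromRel fun u v : ZMod μ => v = u + 1).Adj coin v0 t
        (v0 - (i : ZMod μ)) ω := by
  intro t
  induction t with
  | zero =>
    intro i hi
    simp only [llP, Nat.le_zero] at hi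
    subst hi
    show (v0 - ((0:ℕ) : ZMod μ)) = v0
    simp
  | succ t ih =>
    intro i hi
    by_cases h : i ≤ llP coin v0 t ω
    · exact Or.inl (ih i h)
    · rw [llP] at hi
      split_ifs at hi with hc
      · have hieq : i = llP coin v0 t ω + 1 := by omega
        refine Or.inr ⟨v0 - (llP coin v0 t ω : ZMod μ), ?_, ih _ le_rfl, ?_⟩
        · rw [SimpleGraph.fromRel_adj]
          constructor
          · intro hh
            apply one_ne_zero_zmod hμ
            rw [hieq] at hh
            push_cast at hh
            linear_combination hh
          · right
            rw [hieq]; push_cast; ring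
        · rw [hieq] at hi ⊢
          push_cast
          convert hc using 2
          ring
      · omega
end Aux4

section Aux5
set_option linter.unusedSectionVars false
variable {Ω : Type} [MeasurableSpace Ω] {μ : ℕ}
variable (coin : ℕ → ZMod μ → ZMod μ → Ω → Bool) (v0 : ZMod μ)

lemma card_informed [NeZero μ] (hμ : 3 ≤ μ) (ω : Ω) (t k : ℕ) (hk2 : k ≤ μ)
    (h : k ≤ SSP coin v0 t ω + 1) :
    k ≤ Nat.card {v : ZMod μ //
      informed (SimpleGraph.fromRel fun u v : ZMod μ => v = u + 1).Adj coin v0 t v ω} := by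
  set r := rrP coin v0 t ω with hr
  set l := llP coin v0 t ω with hl
  have hrl : k ≤ r + l + 1 := h
  set f : Fin k → {v : ZMod μ //
      informed (SimpleGraph.fromRel fun u v : ZMod μ => v = u + 1).Adj coin v0 t v ω} :=
    fun i => ⟨v0 + (((r : ℤ) - (i : ℕ)) : ℤ), by
      by_cases hc : (i : ℕ) ≤ r
      · have : ((r : ℤ) - (i : ℕ)) = ((r - (i : ℕ) : ℕ) : ℤ) := by omega
        rw [this]
        have h2 : (v0 + (((r - (i:ℕ) : ℕ) : ℤ) : ZMod μ)) = v0 + ((r - (i:ℕ) : ℕ) : ZMod μ) := by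
          push_cast; ring
        rw [h2]
        exact informed_right coin v0 hμ ω t _ (Nat.sub_le r _)
      · have hil : ((i : ℕ) - r : ℕ) ≤ l := by
          have := i.isLt; omega
        have : ((r : ℤ) - (i : ℕ)) = -(((i : ℕ) - r : ℕ) : ℤ) := by omega
        rw [this]
        rw [Int.cast_neg, Int.cast_natCast, ← sub_eq_add_neg]
        exact informed_left coin v0 hμ ω t _ hil⟩ with hf
  have hinj : Function.Injective f := by
    intro i j hij
    have h1 : (((r : ℤ) - (i : ℕ)) : ZMod μ) = (((r : ℤ) - (j : ℕ)) : ZMod μ) := by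
      have := congrArg Subtype.val hij
      simpa [hf] using this
    have h2 : (((i : ℕ) : ZMod μ)) = ((j : ℕ) : ZMod μ) := by
      push_cast at h1
      linear_combination -h1
    have h3 : ((i:ℕ) : ZMod μ).val = ((j:ℕ) : ZMod μ).val := by rw [h2]
    rw [ZMod.val_cast_of_lt (lt_of_lt_of_le i.isLt hk2),
      ZMod.val_cast_of_lt (lt_of_lt_of_le j.isLt hk2)] at h3
    exact Fin.ext h3
  calc k = Nat.card (Fin k) := (Nat.card_eq_fintype_card.trans (Fintype.card_fin k)).symm
    _ ≤ _ := Nat.card_le_card_of_injective f hinj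

lemma SSP_mono (ω : Ω) (t : ℕ) : SSP coin v0 t ω ≤ SSP coin v0 (t+1) ω := by
  simp only [SSP, rrP, llP]
  omega

lemma SSP_zero (ω : Ω) : SSP coin v0 0 ω = 0 := rfl

lemma SSP_succ (ω : Ω) (t : ℕ) : SSP coin v0 (t+1) ω = SSP coin v0 t ω +
    (if coin t (v0 + (rrP coin v0 t ω : ZMod μ)) (v0 + (rrP coin v0 t ω : ZMod μ) + 1) ω = true
      then 1 else 0) +
    (if coin t (v0 - (llP coin v0 t ω : ZMod μ)) (v0 - (llP coin v0 t ω : ZMod μ) - 1) ω = true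
      then 1 else 0) := by
  simp only [SSP, rrP, llP]
  ring

end Aux5

section Aux6
set_option linter.unusedSectionVars false
variable {Ω : Type} [MeasurableSpace Ω] {μ : ℕ}
variable {coin : ℕ → ZMod μ → ZMod μ → Ω → Bool} {v0 : ZMod μ}
variable {P : Measure Ω} [IsProbabilityMeasure P] {p : ℝ}

lemma measurableSet_SSP_pred (t : ℕ) (Q : ℕ → Prop) :
    MeasurableSet[FF coin t] {ω | Q (SSP coin v0 t ω)} := by
  have : {ω | Q (SSP coin v0 t ω)} = ⋃ (d : ℕ) (_ : Q d), {ω | SSP coin v0 t ω = d} := by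
    ext ω
    simp only [Set.mem_setOf_eq, Set.mem_iUnion]
    exact ⟨fun h => ⟨_, h, rfl⟩, fun ⟨d, h, hd⟩ => hd ▸ h⟩
  rw [this]
  exact MeasurableSet.iUnion fun d => MeasurableSet.iUnion fun _ => measurableSet_SSP_eq coin v0 t d

lemma measurable_SSP (hm : ∀ t u v, Measurable (coin t u v)) (t : ℕ) :
    Measurable (SSP coin v0 t : Ω → ℕ) := by
  apply measurable_to_countable'
  intro c
  exact FF_le coin hm t _ (measurableSet_SSP_eq coin v0 t c)

lemma measurableSet_adapt (hm : ∀ t u v, Measurable (coin t u v)) (t : ℕ)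
    (g : ℕ → ZMod μ × ZMod μ) (q : Ω → ℕ) (hq : ∀ a, MeasurableSet[FF coin t] {ω | q ω = a}) :
    MeasurableSet {ω | coin t (g (q ω)).1 (g (q ω)).2 ω = true} := by
  have : {ω | coin t (g (q ω)).1 (g (q ω)).2 ω = true} =
      ⋃ a : ℕ, ({ω | q ω = a} ∩ {ω | coin t (g a).1 (g a).2 ω = true}) := by
    ext ω
    simp only [Set.mem_setOf_eq, Set.mem_iUnion, Set.mem_inter_iff]
    constructor
    · intro h; exact ⟨q ω, rfl, h⟩
    · rintro ⟨a, ha, h⟩; rwa [← ha] at h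
  rw [this]
  exact MeasurableSet.iUnion fun a => (FF_le coin hm t _ (hq a)).inter
    ((hm t (g a).1 (g a).2) (by trivial : MeasurableSet {b | b = true}))

lemma step_one (hcoin : PropagationCoins coin P p) (t m : ℕ) :
    (∫⁻ ω, ((min (SSP coin v0 t ω) m : ℕ) : ℝ≥0∞) ∂P)
      + (ENNReal.ofReal p * P {ω | SSP coin v0 t ω + 2 ≤ m}
      + ENNReal.ofReal p * P {ω | SSP coin v0 t ω + 2 ≤ m}
      + ENNReal.ofReal p * P {ω | SSP coin v0 t ω + 1 = m})
    ≤ ∫⁻ ω, ((min (SSP coin v0 (t+1) ω) m : ℕ) : ℝ≥0∞) ∂P := by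
  classical
  have hm := hcoin.1
  set gR : ℕ → ZMod μ × ZMod μ := fun a => (v0 + (a : ZMod μ), v0 + (a : ZMod μ) + 1) with hgR
  set gL : ℕ → ZMod μ × ZMod μ := fun a => (v0 - (a : ZMod μ), v0 - (a : ZMod μ) - 1) with hgL
  set R : Set Ω := {ω | coin t (gR (rrP coin v0 t ω)).1 (gR (rrP coin v0 t ω)).2 ω = true} with hR
  set L : Set Ω := {ω | coin t (gL (llP coin v0 t ω)).1 (gL (llP coin v0 t ω)).2 ω = true} with hL
  set E1 : Set Ω := {ω | SSP coin v0 t ω + 2 ≤ m} with hE1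
  set E3 : Set Ω := {ω | SSP coin v0 t ω + 1 = m} with hE3
  have hE1m : MeasurableSet[FF coin t] E1 :=
    measurableSet_SSP_pred (v0 := v0) t (fun s => s + 2 ≤ m)
  have hE3m : MeasurableSet[FF coin t] E3 :=
    measurableSet_SSP_pred (v0 := v0) t (fun s => s + 1 = m)
  have hRm : MeasurableSet R := measurableSet_adapt hm t gR _ (measurableSet_rrP coin v0 t)
  have hLm : MeasurableSet L := measurableSet_adapt hm t gL _ (measurableSet_llP coin v0 t)
  have hle := FF_le coin hm t
  have hfmeas : Measurable fun ω => ((min (SSP coin v0 t ω) m : ℕ) : ℝ≥0∞) :=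
    (measurable_from_top (f := fun n : ℕ => ((min n m : ℕ) : ℝ≥0∞))).comp
      (measurable_SSP (v0 := v0) hm t)
  -- pointwise inequality
  have hpt : ∀ ω, ((min (SSP coin v0 t ω) m : ℕ) : ℝ≥0∞)
      + ((E1 ∩ R).indicator (1 : Ω → ℝ≥0∞) ω
      + (E1 ∩ L).indicator (1 : Ω → ℝ≥0∞) ω
      + (E3 ∩ R).indicator (1 : Ω → ℝ≥0∞) ω)
      ≤ ((min (SSP coin v0 (t+1) ω) m : ℕ) : ℝ≥0∞) := by
    intro ω
    have hsucc : SSP coin v0 (t+1) ω = SSP coin v0 t ω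
        + (if ω ∈ R then 1 else 0) + (if ω ∈ L then 1 else 0) := by
      simp only [SSP_succ, hR, hgR, hL, hgL, Set.mem_setOf_eq]
    have cast_ind : ∀ A : Set Ω, A.indicator (1 : Ω → ℝ≥0∞) ω
        = (((if ω ∈ A then 1 else 0 : ℕ)) : ℝ≥0∞) := by
      intro A; by_cases h : ω ∈ A <;> simp [h]
    rw [hsucc, cast_ind, cast_ind, cast_ind, ← Nat.cast_add, ← Nat.cast_add, ← Nat.cast_add,
      Nat.cast_le]
    have hmemE1 : (ω ∈ E1) = (SSP coin v0 t ω + 2 ≤ m) := by rw [hE1]; rfl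
    have hmemE3 : (ω ∈ E3) = (SSP coin v0 t ω + 1 = m) := by rw [hE3]; rfl
    by_cases h1 : ω ∈ R <;> by_cases h2 : ω ∈ L <;>
      simp only [h1, h2, Set.mem_inter_iff, hmemE1, hmemE3, and_true, and_false, if_true,
        if_false, ite_true, ite_false, add_zero, zero_add, min_def] <;>
      first | omega | (split_ifs <;> omega)
  calc (∫⁻ ω, ((min (SSP coin v0 t ω) m : ℕ) : ℝ≥0∞) ∂P)
      + (ENNReal.ofReal p * P E1 + ENNReal.ofReal p * P E1 + ENNReal.ofReal p * P E3)
      = (∫⁻ ω, ((min (SSP coin v0 t ω) m : ℕ) : ℝ≥0∞) ∂P)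
        + (P (E1 ∩ R) + P (E1 ∩ L) + P (E3 ∩ R)) := by
        rw [fresh_adapt hcoin t gR _ E1 (measurableSet_rrP coin v0 t) hE1m,
          fresh_adapt hcoin t gL _ E1 (measurableSet_llP coin v0 t) hE1m,
          fresh_adapt hcoin t gR _ E3 (measurableSet_rrP coin v0 t) hE3m]
    _ = ∫⁻ ω, (((min (SSP coin v0 t ω) m : ℕ) : ℝ≥0∞)
        + ((E1 ∩ R).indicator (1 : Ω → ℝ≥0∞) ω
        + (E1 ∩ L).indicator (1 : Ω → ℝ≥0∞) ω
        + (E3 ∩ R).indicator (1 : Ω → ℝ≥0∞) ω)) ∂P := by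
        have h1 : Measurable ((E1 ∩ R).indicator (1 : Ω → ℝ≥0∞)) :=
          measurable_one.indicator ((hle _ hE1m).inter hRm)
        have h2 : Measurable ((E1 ∩ L).indicator (1 : Ω → ℝ≥0∞)) :=
          measurable_one.indicator ((hle _ hE1m).inter hLm)
        have h3 : Measurable ((E3 ∩ R).indicator (1 : Ω → ℝ≥0∞)) :=
          measurable_one.indicator ((hle _ hE3m).inter hRm)
        rw [lintegral_add_left hfmeas, lintegral_add_left
            (f := fun a => (E1 ∩ R).indicator (1 : Ω → ℝ≥0∞) a + (E1 ∩ L).indicator 1 a) (h1.add h2), lintegral_add_left h1,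
          lintegral_indicator_one ((hle _ hE1m).inter hRm),
          lintegral_indicator_one ((hle _ hE1m).inter hLm),
          lintegral_indicator_one ((hle _ hE3m).inter hRm)]
    _ ≤ _ := lintegral_mono hpt

lemma step_two (hcoin : PropagationCoins coin P p) (t m : ℕ) :
    P {ω | m ≤ SSP coin v0 t ω} + ENNReal.ofReal p * P {ω | SSP coin v0 t ω + 1 = m}
    ≤ P {ω | m ≤ SSP coin v0 (t+1) ω} := by
  classical
  have hm := hcoin.1
  have hle := FF_le coin hm t
  set gR : ℕ → ZMod μ × ZMod μ := fun a => (v0 + (a : ZMod μ), v0 + (a : ZMod μ) + 1) with hgR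
  set R : Set Ω := {ω | coin t (gR (rrP coin v0 t ω)).1 (gR (rrP coin v0 t ω)).2 ω = true} with hR
  set E3 : Set Ω := {ω | SSP coin v0 t ω + 1 = m} with hE3
  have hE3m : MeasurableSet[FF coin t] E3 :=
    measurableSet_SSP_pred (v0 := v0) t (fun s => s + 1 = m)
  have hRm : MeasurableSet R := measurableSet_adapt hm t gR _ (measurableSet_rrP coin v0 t)
  have hfresh : P (E3 ∩ R) = ENNReal.ofReal p * P E3 :=
    fresh_adapt hcoin t gR _ E3 (measurableSet_rrP coin v0 t) hE3m
  rw [← hfresh]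
  have hdisj : Disjoint {ω | m ≤ SSP coin v0 t ω} (E3 ∩ R) := by
    refine Set.disjoint_left.mpr fun ω h1 h2 => ?_
    have h3 := h2.1
    simp only [hE3, Set.mem_setOf_eq] at h3 h1
    omega
  rw [← measure_union hdisj ((hle _ hE3m).inter hRm)]
  apply measure_mono
  rintro ω (h | ⟨h3, hr⟩)
  · simp only [Set.mem_setOf_eq] at h ⊢
    exact le_trans h (SSP_mono coin v0 ω t)
  · simp only [hE3, Set.mem_setOf_eq] at h3 ⊢
    have hsucc : SSP coin v0 t ω + 1 ≤ SSP coin v0 (t+1) ω := by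
      rw [SSP_succ]
      have hmem : ω ∈ R := hr
      simp only [hR, hgR, Set.mem_setOf_eq] at hmem
      rw [if_pos hmem]
      omega
    omega

end Aux6

section Aux7
set_option linter.unusedSectionVars false
variable {Ω : Type} [MeasurableSpace Ω] {μ : ℕ}
variable {coin : ℕ → ZMod μ → ZMod μ → Ω → Bool} {v0 : ZMod μ}
variable {P : Measure Ω} [IsProbabilityMeasure P] {p : ℝ}

lemma tele_one (hcoin : PropagationCoins coin P p) (m N : ℕ) :
    ∑ t ∈ Finset.range N, (ENNReal.ofReal p * P {ω | SSP coin v0 t ω + 2 ≤ m}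
      + ENNReal.ofReal p * P {ω | SSP coin v0 t ω + 2 ≤ m}
      + ENNReal.ofReal p * P {ω | SSP coin v0 t ω + 1 = m}) ≤ (m : ℝ≥0∞) := by
  have key : ∀ N, ∑ t ∈ Finset.range N, (ENNReal.ofReal p * P {ω | SSP coin v0 t ω + 2 ≤ m}
      + ENNReal.ofReal p * P {ω | SSP coin v0 t ω + 2 ≤ m}
      + ENNReal.ofReal p * P {ω | SSP coin v0 t ω + 1 = m})
      ≤ ∫⁻ ω, ((min (SSP coin v0 N ω) m : ℕ) : ℝ≥0∞) ∂P := by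
    intro N
    induction N with
    | zero => simp
    | succ N ih =>
      rw [Finset.sum_range_succ]
      exact le_trans (add_le_add_left ih _) (step_one hcoin N m)
  refine le_trans (key N) ?_
  have hb : ∀ ω : Ω, ((min (SSP coin v0 N ω) m : ℕ) : ℝ≥0∞) ≤ ((m : ℕ) : ℝ≥0∞) :=
    fun ω => Nat.cast_le.mpr (min_le_right _ _)
  refine le_trans (lintegral_mono hb) ?_
  rw [lintegral_const, measure_univ, mul_one]

lemma tele_two (hcoin : PropagationCoins coin P p) (m N : ℕ) :
    ∑ t ∈ Finset.range N, ENNReal.ofReal p * P {ω | SSP coin v0 t ω + 1 = m} ≤ 1 := by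
  have key : ∀ N, ∑ t ∈ Finset.range N, ENNReal.ofReal p * P {ω | SSP coin v0 t ω + 1 = m}
      ≤ P {ω | m ≤ SSP coin v0 N ω} := by
    intro N
    induction N with
    | zero => simp
    | succ N ih =>
      rw [Finset.sum_range_succ]
      exact le_trans (add_le_add_left ih _) (step_two hcoin N m)
  exact le_trans (key N) prob_le_one

end Aux7

/-- **Propagation on the bidirectional ring.** On the undirected cycle graph with `μ ≥ 3`
vertices, for every `1 ≤ k ≤ μ` the expected number of rounds until at least `k` vertices are
informed is at most `k / (2p)`. -/
theorem propagation_ring {Ω : Type} [MeasurableSpace Ω]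
    (P : Measure Ω) [IsProbabilityMeasure P] (p : ℝ) (hp0 : 0 < p) (hp1 : p ≤ 1)
    (μ : ℕ) [NeZero μ] (hμ : 3 ≤ μ) (v0 : ZMod μ)
    (coin : ℕ → ZMod μ → ZMod μ → Ω → Bool) (hcoin : PropagationCoins coin P p)
    (k : ℕ) (hk1 : 1 ≤ k) (hk2 : k ≤ μ) :
    ∫⁻ ω, (⨅ (t : ℕ) (_ : k ≤ Nat.card {v : ZMod μ //
        informed (SimpleGraph.fromRel fun u v : ZMod μ => v = u + 1).Adj coin v0 t v ω}),
      (t : ℝ≥0∞)) ∂P ≤ ENNReal.ofReal (k / (2 * p)) := by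
  classical
  set m := k - 1 with hmdef
  have hmk : m + 1 = k := by omega
  set pe := ENNReal.ofReal p with hpe
  have hpe0 : pe ≠ 0 := (ENNReal.ofReal_pos.mpr hp0).ne'
  have hpet : pe ≠ ⊤ := ENNReal.ofReal_ne_top
  set E : ℕ → Set Ω := fun t => {ω | SSP coin v0 t ω + 1 ≤ m} with hE
  have hEmeas : ∀ t, MeasurableSet (E t) := fun t =>
    FF_le coin hcoin.1 t _ (measurableSet_SSP_pred (v0 := v0) t (fun s => s + 1 ≤ m))
  -- decomposition of P (E t)
  have hPE : ∀ t, P (E t) = P {ω | SSP coin v0 t ω + 2 ≤ m} + P {ω | SSP coin v0 t ω + 1 = m} := by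
    intro t
    have hsplit : E t = {ω | SSP coin v0 t ω + 2 ≤ m} ∪ {ω | SSP coin v0 t ω + 1 = m} := by
      ext ω; simp only [hE, Set.mem_setOf_eq, Set.mem_union]; omega
    have hd : Disjoint {ω | SSP coin v0 t ω + 2 ≤ m} {ω | SSP coin v0 t ω + 1 = m} := by
      refine Set.disjoint_left.mpr fun ω h1 h2 => ?_
      simp only [Set.mem_setOf_eq] at h1 h2
      omega
    rw [hsplit, measure_union hd
      (FF_le coin hcoin.1 t _ (measurableSet_SSP_pred (v0 := v0) t (fun s => s + 1 = m)))]
  -- the sum bound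
  have hsum : ∀ N, 2 * pe * ∑ t ∈ Finset.range N, P (E t) ≤ (k : ℝ≥0∞) := by
    intro N
    have h1 := tele_one (v0 := v0) hcoin m N
    have h2 := tele_two (v0 := v0) hcoin m N
    have heq : 2 * pe * ∑ t ∈ Finset.range N, P (E t)
        = (∑ t ∈ Finset.range N, (pe * P {ω | SSP coin v0 t ω + 2 ≤ m}
          + pe * P {ω | SSP coin v0 t ω + 2 ≤ m}
          + pe * P {ω | SSP coin v0 t ω + 1 = m}))
          + ∑ t ∈ Finset.range N, pe * P {ω | SSP coin v0 t ω + 1 = m} := by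
      rw [Finset.mul_sum, ← Finset.sum_add_distrib]
      refine Finset.sum_congr rfl fun t _ => ?_
      rw [hPE t]
      ring
    rw [heq]
    calc _ ≤ ((m : ℝ≥0∞)) + 1 := add_le_add h1 h2
      _ = (k : ℝ≥0∞) := by exact_mod_cast congrArg (Nat.cast : ℕ → ℝ≥0∞) hmk
  have htsum : 2 * pe * ∑' t, P (E t) ≤ (k : ℝ≥0∞) := by
    rw [ENNReal.tsum_eq_iSup_nat, ENNReal.mul_iSup]
    exact iSup_le hsum
  have h2pe0 : 2 * pe ≠ 0 := by
    simp only [ne_eq, mul_eq_zero, not_or]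
    exact ⟨two_ne_zero, hpe0⟩
  have h2pet : 2 * pe ≠ ⊤ := ENNReal.mul_ne_top (by simp) hpet
  have hW : ∑' t, P (E t) ≤ (k : ℝ≥0∞) / (2 * pe) := by
    rw [ENNReal.le_div_iff_mul_le (Or.inl h2pe0) (Or.inl h2pet), mul_comm]
    exact htsum
  have hRHS : ENNReal.ofReal ((k : ℝ) / (2 * p)) = (k : ℝ≥0∞) / (2 * pe) := by
    rw [ENNReal.ofReal_div_of_pos (by positivity), ENNReal.ofReal_natCast,
      ENNReal.ofReal_mul (by norm_num), ENNReal.ofReal_ofNat]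
  -- pointwise bound
  have hpt : ∀ ω, (⨅ (t : ℕ) (_ : k ≤ Nat.card {v : ZMod μ //
        informed (SimpleGraph.fromRel fun u v : ZMod μ => v = u + 1).Adj coin v0 t v ω}),
      (t : ℝ≥0∞)) ≤ ∑' t, (E t).indicator (1 : Ω → ℝ≥0∞) ω := by
    intro ω
    by_cases hx : ∃ t, m ≤ SSP coin v0 t ω
    · set N := sInf {t | m ≤ SSP coin v0 t ω} with hN
      have hNmem : m ≤ SSP coin v0 N ω := Nat.sInf_mem hx
      have hcard : k ≤ Nat.card {v : ZMod μ //
          informed (SimpleGraph.fromRel fun u v : ZMod μ => v = u + 1).Adj coin v0 N v ω} :=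
        card_informed coin v0 hμ ω N k hk2 (by omega)
      refine le_trans (iInf_le_of_le N (iInf_le _ hcard)) ?_
      have hind : ∀ t < N, (E t).indicator (1 : Ω → ℝ≥0∞) ω = 1 := by
        intro t ht
        have hnot : t ∉ {t | m ≤ SSP coin v0 t ω} := Nat.notMem_of_lt_sInf ht
        simp only [Set.mem_setOf_eq, not_le] at hnot
        have : ω ∈ E t := by simp only [hE, Set.mem_setOf_eq]; omega
        simp [Set.indicator_apply, this]
      calc (N : ℝ≥0∞) = ∑ t ∈ Finset.range N, (E t).indicator (1 : Ω → ℝ≥0∞) ω := by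
            rw [Finset.sum_congr rfl (fun t ht => hind t (Finset.mem_range.mp ht))]
            simp
        _ ≤ _ := ENNReal.sum_le_tsum _
    · push_neg at hx
      have hall : ∀ t, (E t).indicator (1 : Ω → ℝ≥0∞) ω = 1 := by
        intro t
        have := hx t
        have : ω ∈ E t := by simp only [hE, Set.mem_setOf_eq]; omega
        simp [Set.indicator_apply, this]
      have : ∑' t, (E t).indicator (1 : Ω → ℝ≥0∞) ω = ⊤ := by
        rw [tsum_congr hall]
        exact ENNReal.tsum_const_eq_top_of_ne_zero one_ne_zero
      rw [this]
      exact le_top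
  calc ∫⁻ ω, (⨅ (t : ℕ) (_ : k ≤ Nat.card {v : ZMod μ //
        informed (SimpleGraph.fromRel fun u v : ZMod μ => v = u + 1).Adj coin v0 t v ω}),
      (t : ℝ≥0∞)) ∂P
      ≤ ∫⁻ ω, ∑' t, (E t).indicator (1 : Ω → ℝ≥0∞) ω ∂P := lintegral_mono hpt
    _ = ∑' t, P (E t) := by
        rw [lintegral_tsum (fun t => (measurable_one.indicator (hEmeas t)).aemeasurable)]
        exact tsum_congr fun t => lintegral_indicator_one (hEmeas t)
    _ ≤ (k : ℝ≥0∞) / (2 * pe) := hW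
    _ = ENNReal.ofReal ((k : ℝ) / (2 * p)) := hRHS.symm
end
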